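/- arXiv:2605.17529 — 6 statements merged into one kernel-verified Lean document; each statement's English description precedes it below -/
import Mathlib

section
/- Let λ ∈ ℝ be irrational, and define f₁(t) = t^{3/2} and f₂(t) = λ t^{3/2} + t for t > 0. Then for every function F of the form F = Σ_{m=0}^{M} a_m f₁^{(m)} + Σ_{m=0}^{M} b_m f₂^{(m)}, where M ≥ 0 and all a_m, b_m ∈ ℤ (with f^{(m)} denoting the m-th derivative), either F(t) → 0 as t → ∞ or |F(t)| → ∞ as t → ∞. -/
open Filter

/-- Distance from a real number to the nearest integer. -/
noncomputable def distNearestInt (x : ℝ) : ℝ := |x - round x|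

/-- A set of naturals is thick if it contains arbitrarily long blocks of
consecutive integers. -/
def Thick (S : Set ℕ) : Prop := ∀ L : ℕ, ∃ N : ℕ, ∀ j : ℕ, j ≤ L → N + j ∈ S

/-- A set of naturals is syndetic if it has bounded gaps. -/
def Syndetic (S : Set ℕ) : Prop :=
  ∃ G : ℕ, 0 < G ∧ ∀ a : ℕ, ∃ n ∈ S, a ≤ n ∧ n < a + G

/-- A set is piecewise syndetic if it is the intersection of a thick set and a
syndetic set. -/
def PiecewiseSyndetic (S : Set ℕ) : Prop :=
  ∃ T B : Set ℕ, Thick T ∧ Syndetic B ∧ S = T ∩ B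

open Classical in
/-- The number of elements of `E ∩ {1, …, N}`. -/
noncomputable def countIn (E : Set ℕ) (N : ℕ) : ℕ :=
  ((Finset.Icc 1 N).filter (fun n => n ∈ E)).card

/-- `E` has a natural density that exists and is positive. -/
def PosDensity (E : Set ℕ) : Prop :=
  ∃ d : ℝ, 0 < d ∧
    Tendsto (fun N : ℕ => (countIn E N : ℝ) / (N : ℝ)) atTop (nhds d)

/-- The return-time set `R_u(E) = {n : ∃ m ∈ E, m + u n ∈ E}`. -/
def retSet (u : ℕ → ℤ) (E : Set ℕ) : Set ℕ :=
  {n : ℕ | ∃ m m' : ℕ, m ∈ E ∧ m' ∈ E ∧ (m' : ℤ) = (m : ℤ) + u n}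

/-- The return-time set along the floor of a real-valued function. -/
noncomputable def retSetFloor (f : ℝ → ℝ) (E : Set ℕ) : Set ℕ :=
  retSet (fun n => ⌊f (n : ℝ)⌋) E

/-- The return-time set along the closest integer to a real-valued function. -/
noncomputable def retSetRound (f : ℝ → ℝ) (E : Set ℕ) : Set ℕ :=
  retSet (fun n => round (f (n : ℝ))) E

open Topology

noncomputable def cc : ℕ → ℝ := fun m => ∏ i ∈ Finset.range m, ((3:ℝ)/2 - i)

lemma cc_succ (m : ℕ) : cc (m+1) = cc m * ((3:ℝ)/2 - m) := Finset.prod_range_succ _ _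

lemma cc_zero : cc 0 = 1 := rfl

lemma cc_one : cc 1 = 3/2 := by simp [cc]

lemma iter_rpow (m : ℕ) : ∀ t : ℝ, 0 < t →
    iteratedDeriv m (fun s : ℝ => s ^ ((3:ℝ)/2)) t = cc m * t ^ ((3:ℝ)/2 - m) := by
  induction m with
  | zero => intro t ht; simp [cc]
  | succ m ih =>
    intro t ht
    rw [iteratedDeriv_succ]
    have heq : deriv (iteratedDeriv m (fun s : ℝ => s ^ ((3:ℝ)/2))) t
        = deriv (fun s => cc m * s ^ ((3:ℝ)/2 - m)) t := by
      apply Filter.EventuallyEq.deriv_eq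
      filter_upwards [isOpen_Ioi.mem_nhds ht] with s hs
      exact ih s hs
    have h := (Real.hasDerivAt_rpow_const (x := t) (p := (3:ℝ)/2 - m)
      (Or.inl (ne_of_gt ht))).const_mul (cc m)
    rw [heq, h.deriv, cc_succ]
    have hexp : (3:ℝ)/2 - (m:ℝ) - 1 = (3:ℝ)/2 - ((m+1 : ℕ):ℝ) := by push_cast; ring
    rw [hexp]; ring

noncomputable def dd : ℕ → ℝ → ℝ := fun m t => if m = 0 then t else if m = 1 then 1 else 0

lemma dd_hasDeriv (m : ℕ) (t : ℝ) : HasDerivAt (dd m) (dd (m+1) t) t := by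
  match m with
  | 0 => rw [show dd 0 = id from funext fun s => by simp [dd]]; simpa [dd] using hasDerivAt_id t
  | 1 => rw [show dd 1 = (fun _ => (1:ℝ)) from funext fun s => by simp [dd]]; simpa [dd] using hasDerivAt_const t (1:ℝ)
  | (n+2) => rw [show dd (n+2) = (fun _ => (0:ℝ)) from funext fun s => by simp [dd]]; simpa [dd] using hasDerivAt_const t (0:ℝ)

lemma iter_f2 (lam : ℝ) (m : ℕ) : ∀ t : ℝ, 0 < t →
    iteratedDeriv m (fun s : ℝ => lam * s ^ ((3:ℝ)/2) + s) t
      = lam * cc m * t ^ ((3:ℝ)/2 - m) + dd m t := by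
  induction m with
  | zero => intro t ht; simp [cc, dd]
  | succ m ih =>
    intro t ht
    rw [iteratedDeriv_succ]
    have heq : deriv (iteratedDeriv m (fun s : ℝ => lam * s ^ ((3:ℝ)/2) + s)) t
        = deriv (fun s => lam * cc m * s ^ ((3:ℝ)/2 - m) + dd m s) t := by
      apply Filter.EventuallyEq.deriv_eq
      filter_upwards [isOpen_Ioi.mem_nhds ht] with s hs
      exact ih s hs
    have h := ((Real.hasDerivAt_rpow_const (x := t) (p := (3:ℝ)/2 - m)
      (Or.inl (ne_of_gt ht))).const_mul (lam * cc m)).add (dd_hasDeriv m t)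
    rw [heq, show deriv (fun s => lam * cc m * s ^ ((3:ℝ)/2 - m) + dd m s) t = _ from h.deriv, cc_succ]
    have hexp : (3:ℝ)/2 - (m:ℝ) - 1 = (3:ℝ)/2 - ((m+1 : ℕ):ℝ) := by push_cast; ring
    rw [hexp]; ring

lemma irr_combo (lam : ℝ) (hlam : Irrational lam) (p q : ℤ)
    (h : (p : ℝ) + lam * q = 0) : p = 0 ∧ q = 0 := by
  by_cases hq : q = 0
  · subst hq
    simp at h
    exact ⟨by exact_mod_cast h, rfl⟩
  · exfalso
    have hq' : (q:ℝ) ≠ 0 := Int.cast_ne_zero.2 hq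
    have : lam = (((-p : ℚ)/(q:ℚ) : ℚ) : ℝ) := by
      push_cast
      field_simp
      linarith
    exact hlam ⟨_, this.symm⟩

lemma abs_tendsto_atTop (h g : ℝ → ℝ) (α : ℝ) (hα : α ≠ 0)
    (hg : Tendsto g atTop atTop)
    (hratio : Tendsto (fun t => h t / g t) atTop (nhds α)) :
    Tendsto (fun t => |h t|) atTop atTop := by
  have h1 : Tendsto (fun t => |h t / g t|) atTop (nhds |α|) := hratio.abs
  have h2 : ∀ᶠ t in atTop, |α|/2 ≤ |h t / g t| :=
    h1.eventually (eventually_ge_nhds (by have := abs_pos.2 hα; linarith))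
  have h3 : ∀ᶠ t in atTop, 0 < g t := hg.eventually_gt_atTop 0
  have h4 : ∀ᶠ t in atTop, |α|/2 * g t ≤ |h t| := by
    filter_upwards [h2, h3] with t h2t h3t
    have hgt : g t ≠ 0 := ne_of_gt h3t
    have : h t = (h t / g t) * g t := by field_simp
    rw [this, abs_mul, abs_of_pos h3t]
    exact mul_le_mul_of_nonneg_right h2t h3t.le
  exact tendsto_atTop_mono' _ h4 (hg.const_mul_atTop (by positivity))


/-- Theorem (i) of Theorem 1.4 (main): for f₁(t) = t^{3/2} and
f₂(t) = λ t^{3/2} + t with λ irrational, every integer combination of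
derivatives of f₁, f₂ tends to 0 or to ∞ in absolute value. -/
theorem stmt_0 (lam : ℝ) (hlam : Irrational lam)
    (f₁ f₂ : ℝ → ℝ)
    (hf₁ : ∀ t : ℝ, f₁ t = t ^ ((3 : ℝ) / 2))
    (hf₂ : ∀ t : ℝ, f₂ t = lam * t ^ ((3 : ℝ) / 2) + t)
    (M : ℕ) (a b : ℕ → ℤ) (F : ℝ → ℝ)
    (hF : ∀ t : ℝ, F t =
      (∑ m ∈ Finset.range (M + 1), (a m : ℝ) * iteratedDeriv m f₁ t) +
      (∑ m ∈ Finset.range (M + 1), (b m : ℝ) * iteratedDeriv m f₂ t)) :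
    Tendsto F atTop (nhds 0) ∨ Tendsto (fun t => |F t|) atTop atTop := by
  have hf₁' : f₁ = fun s : ℝ => s ^ ((3:ℝ)/2) := funext hf₁
  have hf₂' : f₂ = fun s : ℝ => lam * s ^ ((3:ℝ)/2) + s := funext hf₂
  subst hf₁' hf₂'
  set N := M + 1 with hNdef
  have hN1 : 1 ≤ N := Nat.le_add_left 1 M
  set a' : ℕ → ℤ := fun m => if m ≤ M then a m else 0 with ha'
  set b' : ℕ → ℤ := fun m => if m ≤ M then b m else 0 with hb'
  set q : ℕ → ℝ := fun m => ((a' m : ℝ) + lam * (b' m)) * cc m with hq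
  have combo : ∀ m : ℕ, ((a' m : ℝ) + lam * (b' m)) = 0 → a' m = 0 ∧ b' m = 0 :=
    fun m hm => irr_combo lam hlam _ _ hm
  -- the key formula for F on positive reals
  have key : ∀ t : ℝ, 0 < t → F t =
      (∑ m ∈ Finset.range (N+1), q m * t ^ ((3:ℝ)/2 - m)) + (b' 0 : ℝ) * t + (b' 1 : ℝ) := by
    intro t ht
    have s1 : (∑ m ∈ Finset.range (N+1), (a' m : ℝ) * (cc m * t ^ ((3:ℝ)/2 - m)))
        = ∑ m ∈ Finset.range (M + 1),
          (a m : ℝ) * iteratedDeriv m (fun s : ℝ => s ^ ((3:ℝ)/2)) t := by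
      rw [show N + 1 = (M+1) + 1 from rfl, Finset.sum_range_succ]
      have hz : (a' (M+1) : ℝ) = 0 := by simp [ha']
      rw [hz, zero_mul, add_zero]
      apply Finset.sum_congr rfl
      intro m hm
      have hm' : m ≤ M := Nat.lt_succ_iff.1 (Finset.mem_range.1 hm)
      rw [iter_rpow m t ht]
      simp [ha', hm']
    have s2 : (∑ m ∈ Finset.range (N+1), (b' m : ℝ) * (lam * cc m * t ^ ((3:ℝ)/2 - m) + dd m t))
        = ∑ m ∈ Finset.range (M + 1),
          (b m : ℝ) * iteratedDeriv m (fun s : ℝ => lam * s ^ ((3:ℝ)/2) + s) t := by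
      rw [show N + 1 = (M+1) + 1 from rfl, Finset.sum_range_succ]
      have hz : (b' (M+1) : ℝ) = 0 := by simp [hb']
      rw [hz, zero_mul, add_zero]
      apply Finset.sum_congr rfl
      intro m hm
      have hm' : m ≤ M := Nat.lt_succ_iff.1 (Finset.mem_range.1 hm)
      rw [iter_f2 lam m t ht]
      simp [hb', hm']
    have s3 : (∑ m ∈ Finset.range (N+1), (b' m : ℝ) * dd m t)
        = (b' 0 : ℝ) * t + (b' 1 : ℝ) := by
      have hsub : Finset.range 2 ⊆ Finset.range (N+1) := Finset.range_subset_range.2 (by omega)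
      rw [← Finset.sum_subset hsub (fun x _ hnx => ?_)]
      · simp [Finset.sum_range_succ, dd]
      · have hx2 : 2 ≤ x := Nat.not_lt.1 (fun h => hnx (Finset.mem_range.2 h))
        have : dd x t = 0 := by
          simp [dd, show x ≠ 0 by omega, show x ≠ 1 by omega]
        rw [this, mul_zero]
    have e2 : (∑ m ∈ Finset.range (N+1), (b' m : ℝ) * (lam * cc m * t ^ ((3:ℝ)/2 - m) + dd m t))
        = (∑ m ∈ Finset.range (N+1), (b' m : ℝ) * (lam * cc m * t ^ ((3:ℝ)/2 - m)))
          + (∑ m ∈ Finset.range (N+1), (b' m : ℝ) * dd m t) := by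
      rw [← Finset.sum_add_distrib]
      apply Finset.sum_congr rfl
      intro m _
      ring
    have e3 : (∑ m ∈ Finset.range (N+1), (a' m : ℝ) * (cc m * t ^ ((3:ℝ)/2 - m)))
        + (∑ m ∈ Finset.range (N+1), (b' m : ℝ) * (lam * cc m * t ^ ((3:ℝ)/2 - m)))
        = ∑ m ∈ Finset.range (N+1), q m * t ^ ((3:ℝ)/2 - m) := by
      rw [← Finset.sum_add_distrib]
      apply Finset.sum_congr rfl
      intro m _
      simp only [hq]
      ring
    rw [hF t, ← s1, ← s2, e2, s3]
    linarith [e3]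
  -- case analysis
  by_cases h0 : a' 0 = 0 ∧ b' 0 = 0
  · by_cases h1 : a' 1 = 0 ∧ b' 1 = 0
    · -- F → 0
      left
      have hq0 : q 0 = 0 := by simp [hq, h0.1, h0.2]
      have hq1 : q 1 = 0 := by simp [hq, h1.1, h1.2]
      have hsum : Tendsto (fun t : ℝ => ∑ m ∈ Finset.range (N+1),
          q m * t ^ ((3:ℝ)/2 - m)) atTop (nhds 0) := by
        have h := tendsto_finset_sum (x := atTop) (Finset.range (N+1))
          (f := fun (m : ℕ) (t : ℝ) => q m * t ^ ((3:ℝ)/2 - m)) (a := fun _ => (0:ℝ))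
          (fun m _ => ?_)
        · simpa using h
        · by_cases hm0 : m = 0
          · subst hm0; simpa [hq0] using tendsto_const_nhds (α := ℝ) (f := atTop (α := ℝ))
          · by_cases hm1 : m = 1
            · subst hm1; simpa [hq1] using tendsto_const_nhds (α := ℝ) (f := atTop (α := ℝ))
            · have hm2 : 2 ≤ m := by omega
              have hpos : (0:ℝ) < (m:ℝ) - 3/2 := by
                have : (2:ℝ) ≤ (m:ℝ) := by exact_mod_cast hm2
                linarith
              have hexp : (3:ℝ)/2 - (m:ℝ) = -((m:ℝ) - 3/2) := by ring
              simp only [hexp]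
              simpa using (tendsto_rpow_neg_atTop hpos).const_mul (q m)
      have hev : (fun t : ℝ => ∑ m ∈ Finset.range (N+1),
          q m * t ^ ((3:ℝ)/2 - m)) =ᶠ[atTop] F := by
        filter_upwards [eventually_gt_atTop (0:ℝ)] with t ht
        rw [key t ht, h0.2, h1.2]
        simp
      exact hsum.congr' hev
    · -- |F| → ∞ at rate t^(1/2)
      right
      have hq0 : q 0 = 0 := by simp [hq, h0.1, h0.2]
      have hc1 : ((a' 1 : ℝ) + lam * b' 1) ≠ 0 := fun h => h1 (combo 1 h)
      have hq1 : q 1 ≠ 0 := by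
        simp only [hq]
        exact mul_ne_zero hc1 (by rw [cc_one]; norm_num)
      have hsum : Tendsto (fun t : ℝ => ∑ m ∈ Finset.range (N+1),
          q m * t ^ ((1:ℝ) - m)) atTop (nhds (q 1)) := by
        have h := tendsto_finset_sum (x := atTop) (Finset.range (N+1))
          (f := fun (m : ℕ) (t : ℝ) => q m * t ^ ((1:ℝ) - m))
          (a := fun m => if m = 1 then q 1 else 0) (fun m _ => ?_)
        · have hsum1 : (∑ m ∈ Finset.range (N+1), if m = 1 then q 1 else 0) = q 1 := by
            rw [Finset.sum_ite_eq']
            simp only [Finset.mem_range, if_pos (by omega : 1 < N + 1)]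
          rwa [hsum1] at h
        · by_cases hm0 : m = 0
          · subst hm0; simpa [hq0] using tendsto_const_nhds (α := ℝ) (f := atTop (α := ℝ))
          · by_cases hm1 : m = 1
            · subst hm1
              have hexp : (1:ℝ) - ((1:ℕ):ℝ) = 0 := by norm_num
              simp only [hexp]
              simpa using tendsto_const_nhds (α := ℝ) (f := atTop (α := ℝ)) (a := q 1)
            · have hm2 : 2 ≤ m := by omega
              have hpos : (0:ℝ) < (m:ℝ) - 1 := by
                have : (2:ℝ) ≤ (m:ℝ) := by exact_mod_cast hm2
                linarith
              have hexp : (1:ℝ) - (m:ℝ) = -((m:ℝ) - 1) := by ring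
              simp only [hexp]
              simp only [hm1, if_false]
              simpa using (tendsto_rpow_neg_atTop hpos).const_mul (q m)
      have hG : Tendsto (fun t : ℝ => (∑ m ∈ Finset.range (N+1), q m * t ^ ((1:ℝ) - m))
          + (b' 1 : ℝ) * t ^ (-((1:ℝ)/2))) atTop (nhds (q 1)) := by
        have h2 : Tendsto (fun t : ℝ => (b' 1 : ℝ) * t ^ (-((1:ℝ)/2))) atTop (nhds 0) := by
          simpa using (tendsto_rpow_neg_atTop (by norm_num : (0:ℝ) < 1/2)).const_mul ((b' 1 : ℝ))
        simpa using hsum.add h2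
      have hev : (fun t : ℝ => (∑ m ∈ Finset.range (N+1), q m * t ^ ((1:ℝ) - m))
          + (b' 1 : ℝ) * t ^ (-((1:ℝ)/2))) =ᶠ[atTop]
          (fun t : ℝ => F t / t ^ ((1:ℝ)/2)) := by
        filter_upwards [eventually_gt_atTop (0:ℝ)] with t ht
        rw [key t ht, h0.2]
        rw [Int.cast_zero, zero_mul, add_zero, add_div, Finset.sum_div]
        congr 1
        · apply Finset.sum_congr rfl
          intro m _
          rw [mul_div_assoc, ← Real.rpow_sub ht]
          congr 1
          ring
        · rw [Real.rpow_neg ht.le, ← div_eq_mul_inv]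
      exact abs_tendsto_atTop F (fun t => t ^ ((1:ℝ)/2)) (q 1) hq1
        (tendsto_rpow_atTop (by norm_num)) (hG.congr' hev)
  · -- |F| → ∞ at rate t^(3/2)
    right
    have hc0 : ((a' 0 : ℝ) + lam * b' 0) ≠ 0 := fun h => h0 (combo 0 h)
    have hq0 : q 0 ≠ 0 := by
      simp only [hq]
      exact mul_ne_zero hc0 (by rw [cc_zero]; norm_num)
    have hsum : Tendsto (fun t : ℝ => ∑ m ∈ Finset.range (N+1),
        q m * t ^ (-(m:ℝ))) atTop (nhds (q 0)) := by
      have h := tendsto_finset_sum (x := atTop) (Finset.range (N+1))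
        (f := fun (m : ℕ) (t : ℝ) => q m * t ^ (-(m:ℝ)))
        (a := fun m => if m = 0 then q 0 else 0) (fun m _ => ?_)
      · have hsum1 : (∑ m ∈ Finset.range (N+1), if m = 0 then q 0 else 0) = q 0 := by
          rw [Finset.sum_ite_eq']
          simp [Finset.mem_range]
        rwa [hsum1] at h
      · by_cases hm0 : m = 0
        · subst hm0
          have hexp : -((0:ℕ):ℝ) = 0 := by norm_num
          simp only [hexp]
          simpa using tendsto_const_nhds (α := ℝ) (f := atTop (α := ℝ)) (a := q 0)
        · have hpos : (0:ℝ) < (m:ℝ) := by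
            have : 1 ≤ m := by omega
            exact_mod_cast Nat.pos_of_ne_zero hm0
          simp only [hm0, if_false]
          simpa using (tendsto_rpow_neg_atTop hpos).const_mul (q m)
    have hG : Tendsto (fun t : ℝ => (∑ m ∈ Finset.range (N+1), q m * t ^ (-(m:ℝ)))
        + (b' 0 : ℝ) * t ^ (-((1:ℝ)/2)) + (b' 1 : ℝ) * t ^ (-((3:ℝ)/2))) atTop (nhds (q 0)) := by
      have h2 : Tendsto (fun t : ℝ => (b' 0 : ℝ) * t ^ (-((1:ℝ)/2))) atTop (nhds 0) := by
        simpa using (tendsto_rpow_neg_atTop (by norm_num : (0:ℝ) < 1/2)).const_mul ((b' 0 : ℝ))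
      have h3 : Tendsto (fun t : ℝ => (b' 1 : ℝ) * t ^ (-((3:ℝ)/2))) atTop (nhds 0) := by
        simpa using (tendsto_rpow_neg_atTop (by norm_num : (0:ℝ) < 3/2)).const_mul ((b' 1 : ℝ))
      simpa using (hsum.add h2).add h3
    have hev : (fun t : ℝ => (∑ m ∈ Finset.range (N+1), q m * t ^ (-(m:ℝ)))
        + (b' 0 : ℝ) * t ^ (-((1:ℝ)/2)) + (b' 1 : ℝ) * t ^ (-((3:ℝ)/2))) =ᶠ[atTop]
        (fun t : ℝ => F t / t ^ ((3:ℝ)/2)) := by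
      filter_upwards [eventually_gt_atTop (0:ℝ)] with t ht
      rw [key t ht, add_div, add_div, Finset.sum_div]
      congr 1
      · congr 1
        · apply Finset.sum_congr rfl
          intro m _
          rw [mul_div_assoc, ← Real.rpow_sub ht]
          congr 1
          ring
        · rw [mul_div_assoc]
          congr 1
          have h5 := Real.rpow_sub ht 1 ((3:ℝ)/2)
          rw [Real.rpow_one] at h5
          rw [← h5]
          congr 1
          norm_num
      · rw [Real.rpow_neg ht.le, ← div_eq_mul_inv]
    exact abs_tendsto_atTop F (fun t => t ^ ((3:ℝ)/2)) (q 0) hq0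
      (tendsto_rpow_atTop (by norm_num)) (hG.congr' hev)
end

section
/- Let λ ∈ ℝ be irrational, let ξ ∈ ℝ \ ℤ, and let L ∈ ℕ satisfy L·‖ξ‖ > 1 + |λ|, where ‖·‖ is the distance to the nearest integer. Define g₁(t) = t^{3/2} and g₂(t) = λ t^{3/2} + L(t + ξ) for t > 0. Then for every function F of the form F = Σ_{m=0}^{M} a_m g₁^{(m)} + Σ_{m=0}^{M} b_m g₂^{(m)}, where M ≥ 0 and all a_m, b_m ∈ ℤ, either F(t) → 0 as t → ∞ or |F(t)| → ∞ as t → ∞. -/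
open Filter

private lemma iterDeriv_rpow (p : ℝ) (m : ℕ) (t : ℝ) (ht : 0 < t) :
    iteratedDeriv m (fun s : ℝ => s ^ p) t
      = (∏ j ∈ Finset.range m, (p - j)) * t ^ (p - m) := by
  induction m generalizing t with
  | zero => simp
  | succ m ih =>
    rw [iteratedDeriv_succ]
    have hev : iteratedDeriv m (fun s : ℝ => s ^ p)
        =ᶠ[nhds t] fun s => (∏ j ∈ Finset.range m, (p - j)) * s ^ (p - m) := by
      filter_upwards [isOpen_Ioi.mem_nhds ht] with s hs using ih s hs
    rw [hev.deriv_eq]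
    have h : HasDerivAt (fun s : ℝ => (∏ j ∈ Finset.range m, (p - j)) * s ^ (p - m))
        ((∏ j ∈ Finset.range m, (p - j)) * ((p - m) * t ^ (p - m - 1))) t :=
      (Real.hasDerivAt_rpow_const (Or.inl ht.ne')).const_mul _
    rw [h.deriv, Finset.prod_range_succ]
    push_cast
    rw [show p - (↑m + 1) = p - ↑m - 1 by ring]; ring

private def psi (c d : ℝ) : ℕ → ℝ → ℝ
  | 0 => fun t => c * t + d
  | 1 => fun _ => c
  | _ => fun _ => 0

private lemma iterDeriv_g2 (p lam c d : ℝ) (m : ℕ) (t : ℝ) (ht : 0 < t) :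
    iteratedDeriv m (fun s : ℝ => lam * s ^ p + (c * s + d)) t
      = lam * (∏ j ∈ Finset.range m, (p - j)) * t ^ (p - m) + psi c d m t := by
  induction m generalizing t with
  | zero => simp [psi]
  | succ m ih =>
    rw [iteratedDeriv_succ]
    have hev : iteratedDeriv m (fun s : ℝ => lam * s ^ p + (c * s + d))
        =ᶠ[nhds t] fun s => lam * (∏ j ∈ Finset.range m, (p - j)) * s ^ (p - m)
          + psi c d m s := by
      filter_upwards [isOpen_Ioi.mem_nhds ht] with s hs using ih s hs
    rw [hev.deriv_eq]
    have h1 : HasDerivAt (fun s : ℝ => lam * (∏ j ∈ Finset.range m, (p - j)) * s ^ (p - m))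
        (lam * (∏ j ∈ Finset.range m, (p - j)) * ((p - m) * t ^ (p - m - 1))) t :=
      (Real.hasDerivAt_rpow_const (Or.inl ht.ne')).const_mul _
    have h2 : HasDerivAt (psi c d m) (psi c d (m + 1) t) t := by
      match m with
      | 0 => simpa [psi] using ((hasDerivAt_id t).const_mul c).add_const d
      | 1 => simpa [psi] using hasDerivAt_const t c
      | (k+2) => simpa [psi] using hasDerivAt_const t (0 : ℝ)
    rw [(show HasDerivAt (fun s : ℝ => lam * (∏ j ∈ Finset.range m, (p - j)) * s ^ (p - m) + psi c d m s) _ t from h1.add h2).deriv, Finset.prod_range_succ]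
    push_cast
    rw [show p - (↑m + 1) = p - ↑m - 1 by ring]; ring

private lemma sum_psi (c d : ℝ) (b : ℕ → ℤ) (M : ℕ) (t : ℝ) :
    ∑ m ∈ Finset.range (M + 1), (b m : ℝ) * psi c d m t
      = (b 0 : ℝ) * (c * t + d) + (if M = 0 then 0 else (b 1 : ℝ) * c) := by
  match M with
  | 0 => simp [psi]
  | (k+1) =>
    rw [Finset.sum_range_succ', Finset.sum_range_succ']
    simp [psi]
    ring

private lemma mlim (c q : ℝ) (hq : q < 0) :
    Tendsto (fun t : ℝ => c * t ^ q) atTop (nhds 0) := by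
  have h := (tendsto_rpow_neg_atTop (show (0:ℝ) < -q by linarith)).const_mul c
  simpa using h

private lemma abs_atTop_of (e : ℝ) (he : 0 < e) (f : ℝ → ℝ) (K : ℝ) (hK : K ≠ 0)
    (h : Tendsto (fun t => f t * t ^ (-e)) atTop (nhds K)) :
    Tendsto (fun t => |f t|) atTop atTop := by
  have h1 : Tendsto (fun t : ℝ => t ^ e * |f t * t ^ (-e)|) atTop atTop :=
    Tendsto.atTop_mul_pos (abs_pos.2 hK) (tendsto_rpow_atTop he) h.abs
  refine h1.congr' ?_
  filter_upwards [eventually_gt_atTop 0] with t ht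
  rw [abs_mul, abs_of_nonneg (Real.rpow_nonneg ht.le _),
    show t ^ e * (|f t| * t ^ (-e)) = |f t| * (t ^ e * t ^ (-e)) by ring,
    ← Real.rpow_add ht]
  simp

private lemma irr_ne (lam : ℝ) (hlam : Irrational lam) (x y : ℤ) (h : ¬(x = 0 ∧ y = 0)) :
    (x : ℝ) + lam * y ≠ 0 := by
  intro hc
  rcases eq_or_ne y 0 with hy | hy
  · have hx : (x:ℝ) = 0 := by simpa [hy] using hc
    exact h ⟨by exact_mod_cast hx, hy⟩
  · apply hlam
    refine ⟨(-x : ℚ) / (y : ℚ), ?_⟩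
    have hy' : (y:ℝ) ≠ 0 := Int.cast_ne_zero.mpr hy
    push_cast
    field_simp
    linarith

private noncomputable def Kc (lam : ℝ) (a b : ℕ → ℤ) (m : ℕ) : ℝ :=
  ((a m : ℝ) + lam * b m) * ∏ j ∈ Finset.range m, ((3:ℝ)/2 - j)

/-- Theorem (i) of Theorem 1.5: the integer derivative-span condition for
g₁(t) = t^{3/2}, g₂(t) = λ t^{3/2} + L(t + ξ). -/
theorem stmt_2 (lam ξ : ℝ) (hlam : Irrational lam) (hξ : ∀ n : ℤ, (n : ℝ) ≠ ξ)
    (L : ℕ) (hL : (1 : ℝ) + |lam| < (L : ℝ) * distNearestInt ξ)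
    (g₁ g₂ : ℝ → ℝ)
    (hg₁ : ∀ t : ℝ, g₁ t = t ^ ((3 : ℝ) / 2))
    (hg₂ : ∀ t : ℝ, g₂ t = lam * t ^ ((3 : ℝ) / 2) + (L : ℝ) * (t + ξ))
    (M : ℕ) (a b : ℕ → ℤ) (F : ℝ → ℝ)
    (hF : ∀ t : ℝ, F t =
      (∑ m ∈ Finset.range (M + 1), (a m : ℝ) * iteratedDeriv m g₁ t) +
      (∑ m ∈ Finset.range (M + 1), (b m : ℝ) * iteratedDeriv m g₂ t)) :
    Tendsto F atTop (nhds 0) ∨ Tendsto (fun t => |F t|) atTop atTop := by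
  have hg₁' : g₁ = fun s : ℝ => s ^ ((3:ℝ)/2) := funext hg₁
  have hg₂' : g₂ = fun s : ℝ => lam * s ^ ((3:ℝ)/2) + ((L:ℝ) * s + (L:ℝ) * ξ) := by
    funext s; rw [hg₂ s]; ring
  set β : ℝ := if M = 0 then 0 else (b 1 : ℝ) * L with hβdef
  -- the monomial expansion of F on (0, ∞)
  have hFt : ∀ t : ℝ, 0 < t → F t =
      (∑ m ∈ Finset.range (M + 1), Kc lam a b m * t ^ ((3:ℝ)/2 - m)) +
      ((b 0 : ℝ) * ((L:ℝ) * t + (L:ℝ) * ξ) + β) := by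
    intro t ht
    rw [hF t, hg₁', hg₂']
    have s1 : ∑ m ∈ Finset.range (M + 1), (a m : ℝ) * iteratedDeriv m (fun s : ℝ => s ^ ((3:ℝ)/2)) t
        = ∑ m ∈ Finset.range (M + 1), (a m : ℝ) * ((∏ j ∈ Finset.range m, ((3:ℝ)/2 - j)) * t ^ ((3:ℝ)/2 - m)) :=
      Finset.sum_congr rfl fun m _ => by rw [iterDeriv_rpow _ m t ht]
    have s2 : ∑ m ∈ Finset.range (M + 1), (b m : ℝ) *
          iteratedDeriv m (fun s : ℝ => lam * s ^ ((3:ℝ)/2) + ((L:ℝ) * s + (L:ℝ) * ξ)) t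
        = ∑ m ∈ Finset.range (M + 1), (b m : ℝ) *
          (lam * (∏ j ∈ Finset.range m, ((3:ℝ)/2 - j)) * t ^ ((3:ℝ)/2 - m) + psi (L:ℝ) ((L:ℝ)*ξ) m t) :=
      Finset.sum_congr rfl fun m _ => by rw [iterDeriv_g2 _ _ _ _ m t ht]
    rw [s1, s2]
    simp only [mul_add, Finset.sum_add_distrib]
    rw [sum_psi (L:ℝ) ((L:ℝ)*ξ) b M t, ← add_assoc, ← Finset.sum_add_distrib, hβdef]
    have s4 : ∑ m ∈ Finset.range (M + 1),
        ((a m : ℝ) * ((∏ j ∈ Finset.range m, ((3:ℝ)/2 - j)) * t ^ ((3:ℝ)/2 - m))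
          + (b m : ℝ) * (lam * (∏ j ∈ Finset.range m, ((3:ℝ)/2 - j)) * t ^ ((3:ℝ)/2 - m)))
        = ∑ m ∈ Finset.range (M + 1), Kc lam a b m * t ^ ((3:ℝ)/2 - m) :=
      Finset.sum_congr rfl fun m _ => by simp only [Kc]; ring
    rw [s4]
    ring
  -- expansion of F t * t^(-e)
  have key : ∀ e t : ℝ, 0 < t → F t * t ^ (-e) =
      (∑ m ∈ Finset.range (M + 1), Kc lam a b m * t ^ ((3:ℝ)/2 - m - e)) +
      ((b 0 : ℝ) * (L:ℝ)) * t ^ (1 - e) + ((b 0 : ℝ) * (L:ℝ) * ξ + β) * t ^ (-e) := by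
    intro e t ht
    rw [hFt t ht, add_mul, Finset.sum_mul]
    have hmono : ∀ m : ℕ, t ^ ((3:ℝ)/2 - ↑m - e) = t ^ ((3:ℝ)/2 - ↑m) * t ^ (-e) := fun m => by
      rw [show (3:ℝ)/2 - ↑m - e = ((3:ℝ)/2 - ↑m) + (-e) by ring, Real.rpow_add ht]
    have ht1 : t ^ ((1:ℝ) - e) = t * t ^ (-e) := by
      rw [show (1:ℝ) - e = 1 + (-e) by ring, Real.rpow_add ht, Real.rpow_one]
    have hs : (∑ m ∈ Finset.range (M + 1), Kc lam a b m * t ^ ((3:ℝ)/2 - ↑m - e))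
        = ∑ m ∈ Finset.range (M + 1), (Kc lam a b m * t ^ ((3:ℝ)/2 - ↑m)) * t ^ (-e) :=
      Finset.sum_congr rfl fun m _ => by rw [hmono m]; ring
    rw [hs, ← Finset.sum_mul, ht1]
    ring
  by_cases h0 : a 0 = 0 ∧ b 0 = 0
  · by_cases h1 : M = 0 ∨ (a 1 = 0 ∧ b 1 = 0)
    · -- everything tends to 0
      left
      have hb0 : (b 0 : ℝ) = 0 := by exact_mod_cast h0.2
      have hβ : β = 0 := by
        rcases h1 with h1 | h1
        · simp [hβdef, h1]
        · simp [hβdef, h1.2]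
      have hg : Tendsto (fun t : ℝ => (b 0 : ℝ) * ((L:ℝ) * t + (L:ℝ) * ξ) + β) atTop (nhds 0) := by
        simpa [hb0, hβ] using (tendsto_const_nhds : Tendsto (fun _ : ℝ => (0:ℝ)) atTop _)
      have hsum : Tendsto (fun t : ℝ => ∑ m ∈ Finset.range (M + 1),
          Kc lam a b m * t ^ ((3:ℝ)/2 - ↑m)) atTop (nhds 0) := by
        have h := tendsto_finset_sum (f := fun (m : ℕ) (t : ℝ) => Kc lam a b m * t ^ ((3:ℝ)/2 - ↑m))
          (a := fun _ => (0:ℝ)) (x := atTop) (Finset.range (M + 1)) ?_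
        · simpa using h
        · intro m hm
          match m with
          | 0 =>
            have : Kc lam a b 0 = 0 := by simp [Kc, h0.1, h0.2]
            simpa [this] using (tendsto_const_nhds : Tendsto (fun _ : ℝ => (0:ℝ)) atTop _)
          | 1 =>
            have hM : M ≠ 0 := by
              intro hM0
              rw [hM0] at hm
              simp at hm
            have h1' : a 1 = 0 ∧ b 1 = 0 := h1.resolve_left hM
            have : Kc lam a b 1 = 0 := by simp [Kc, h1'.1, h1'.2]
            simpa [this] using (tendsto_const_nhds : Tendsto (fun _ : ℝ => (0:ℝ)) atTop _)
          | (k+2) =>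
            exact mlim _ _ (by push_cast; linarith [Nat.cast_nonneg (α := ℝ) k])
      have := hsum.add hg
      rw [add_zero] at this
      refine this.congr' ?_
      filter_upwards [eventually_gt_atTop 0] with t ht using (hFt t ht).symm
    · -- leading term at t^(1/2) : m = 1 dominates
      right
      rw [not_or] at h1
      obtain ⟨hM, h1⟩ := h1
      have hb0 : (b 0 : ℝ) = 0 := by exact_mod_cast h0.2
      have hK1 : Kc lam a b 1 ≠ 0 := by
        have h := irr_ne lam hlam (a 1) (b 1) h1
        simp only [Kc]
        rw [Finset.prod_range_one]
        intro hc
        rcases mul_eq_zero.1 hc with hc | hc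
        · exact h hc
        · norm_num at hc
      refine abs_atTop_of ((1:ℝ)/2) (by norm_num) F (Kc lam a b 1) hK1 ?_
      have hexp : Tendsto (fun t : ℝ =>
          (∑ m ∈ Finset.range (M + 1), Kc lam a b m * t ^ ((3:ℝ)/2 - ↑m - 1/2)) +
          ((b 0 : ℝ) * (L:ℝ)) * t ^ (1 - 1/2 : ℝ) + ((b 0 : ℝ) * (L:ℝ) * ξ + β) * t ^ (-(1/2) : ℝ))
          atTop (nhds (Kc lam a b 1)) := by
        have hsum : Tendsto (fun t : ℝ => ∑ m ∈ Finset.range (M + 1),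
            Kc lam a b m * t ^ ((3:ℝ)/2 - ↑m - 1/2)) atTop (nhds (Kc lam a b 1)) := by
          have h := tendsto_finset_sum
            (f := fun (m : ℕ) (t : ℝ) => Kc lam a b m * t ^ ((3:ℝ)/2 - ↑m - 1/2))
            (a := fun m => if m = 1 then Kc lam a b 1 else 0) (x := atTop) (Finset.range (M + 1)) ?_
          · have h1mem : (1 : ℕ) ∈ Finset.range (M + 1) := by
              simp [Finset.mem_range]
              omega
            rwa [Finset.sum_ite_eq' (Finset.range (M + 1)) 1, if_pos h1mem] at h
          · intro m hm
            match m with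
            | 0 =>
              have : Kc lam a b 0 = 0 := by simp [Kc, h0.1, h0.2]
              simpa [this] using (tendsto_const_nhds : Tendsto (fun _ : ℝ => (0:ℝ)) atTop _)
            | 1 =>
              have he : ((3:ℝ)/2 - (1:ℕ) - 1/2) = 0 := by norm_num
              simp only [he, Real.rpow_zero, mul_one, if_pos]
              exact tendsto_const_nhds
            | (k+2) =>
              have := mlim (Kc lam a b (k+2)) ((3:ℝ)/2 - ↑(k+2) - 1/2)
                (by push_cast; linarith [Nat.cast_nonneg (α := ℝ) k])
              simpa using this
        have hlin : Tendsto (fun t : ℝ => ((b 0 : ℝ) * (L:ℝ)) * t ^ (1 - 1/2 : ℝ)) atTop (nhds 0) := by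
          simpa [hb0] using (tendsto_const_nhds : Tendsto (fun _ : ℝ => (0:ℝ)) atTop _)
        have hconst : Tendsto (fun t : ℝ => ((b 0 : ℝ) * (L:ℝ) * ξ + β) * t ^ (-(1/2) : ℝ))
            atTop (nhds 0) := mlim _ _ (by norm_num)
        have := (hsum.add hlin).add hconst
        simpa using this
      refine hexp.congr' ?_
      filter_upwards [eventually_gt_atTop 0] with t ht using (key (1/2) t ht).symm
  · -- leading term at t^(3/2) : m = 0 dominates
    right
    have hK0 : Kc lam a b 0 ≠ 0 := by
      have h := irr_ne lam hlam (a 0) (b 0) h0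
      simpa [Kc] using h
    refine abs_atTop_of ((3:ℝ)/2) (by norm_num) F (Kc lam a b 0) hK0 ?_
    have hexp : Tendsto (fun t : ℝ =>
        (∑ m ∈ Finset.range (M + 1), Kc lam a b m * t ^ ((3:ℝ)/2 - ↑m - 3/2)) +
        ((b 0 : ℝ) * (L:ℝ)) * t ^ (1 - 3/2 : ℝ) + ((b 0 : ℝ) * (L:ℝ) * ξ + β) * t ^ (-(3/2) : ℝ))
        atTop (nhds (Kc lam a b 0)) := by
      have hsum : Tendsto (fun t : ℝ => ∑ m ∈ Finset.range (M + 1),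
          Kc lam a b m * t ^ ((3:ℝ)/2 - ↑m - 3/2)) atTop (nhds (Kc lam a b 0)) := by
        have h := tendsto_finset_sum
          (f := fun (m : ℕ) (t : ℝ) => Kc lam a b m * t ^ ((3:ℝ)/2 - ↑m - 3/2))
          (a := fun m => if m = 0 then Kc lam a b 0 else 0) (x := atTop) (Finset.range (M + 1)) ?_
        · have h0mem : (0 : ℕ) ∈ Finset.range (M + 1) := by simp
          rwa [Finset.sum_ite_eq' (Finset.range (M + 1)) 0, if_pos h0mem] at h
        · intro m hm
          match m with
          | 0 =>
            have he : ((3:ℝ)/2 - (0:ℕ) - 3/2) = 0 := by norm_num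
            simp only [he, Real.rpow_zero, mul_one, if_pos]
            exact tendsto_const_nhds
          | (k+1) =>
            have := mlim (Kc lam a b (k+1)) ((3:ℝ)/2 - ↑(k+1) - 3/2)
              (by push_cast; linarith [Nat.cast_nonneg (α := ℝ) k])
            simpa using this
      have hlin : Tendsto (fun t : ℝ => ((b 0 : ℝ) * (L:ℝ)) * t ^ (1 - 3/2 : ℝ)) atTop (nhds 0) :=
        mlim _ _ (by norm_num)
      have hconst : Tendsto (fun t : ℝ => ((b 0 : ℝ) * (L:ℝ) * ξ + β) * t ^ (-(3/2) : ℝ))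
          atTop (nhds 0) := mlim _ _ (by norm_num)
      have := (hsum.add hlin).add hconst
      simpa using this
    refine hexp.congr' ?_
    filter_upwards [eventually_gt_atTop 0] with t ht using (key (3/2) t ht).symm
end

section
/- Let λ ∈ ℝ be irrational, let ξ ∈ ℝ \ ℤ, and let L ∈ ℕ satisfy L·‖ξ‖ > 1 + |λ|. Define g₁(t) = t^{3/2} and g₂(t) = λ t^{3/2} + L(t + ξ). Then there exists a set E ⊆ ℕ of positive natural density such that R_{g₁}(E) ∩ R_{g₂}(E) = ∅. -/
open Filter

private lemma exists_window (lam : ℝ) (hlam : Irrational lam) {δ : ℝ} (hδ : 0 < δ) :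
    ∃ W : ℕ, ∀ a : ℕ, ∃ m : ℕ, a ≤ m ∧ m ≤ a + W ∧ ∃ c : ℤ, |lam * m - c| < δ := by
  obtain ⟨n, hn⟩ := exists_nat_gt (1 / δ)
  have hn0 : 0 < n := by
    have h : (0:ℝ) < (n:ℝ) := lt_trans (by positivity) hn
    exact_mod_cast h
  obtain ⟨j, k, hk0, hkn, hjk⟩ := Real.exists_int_int_abs_mul_sub_le lam hn0
  set η : ℝ := lam * k - j with hηdef
  have hη_ne : η ≠ 0 := by
    intro h
    have hk0' : (k:ℝ) ≠ 0 := by exact_mod_cast hk0.ne'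
    apply hlam
    refine ⟨(j : ℚ) / (k : ℚ), ?_⟩
    have hlameq : lam = (j : ℝ) / (k : ℝ) := by
      rw [eq_div_iff hk0']
      have : lam * k - j = 0 := h
      linarith
    rw [hlameq]; push_cast; ring
  have hηδ : |η| < δ := by
    have h1 : |η| ≤ 1/((n:ℝ)+1) := by
      have h : (k:ℝ) * lam - j = η := by rw [hηdef]; ring
      rwa [h] at hjk
    have h2 : 1/((n:ℝ)+1) < δ := by
      rw [div_lt_iff₀ (by positivity)]
      rw [div_lt_iff₀ hδ] at hn
      nlinarith
    linarith
  set q : ℕ := k.toNat with hqdef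
  have hq : (q:ℤ) = k := Int.toNat_of_nonneg hk0.le
  have hqR : (q:ℝ) = (k:ℝ) := by exact_mod_cast congrArg (Int.cast : ℤ → ℝ) hq
  set K : ℕ := ⌈1/|η|⌉₊ with hKdef
  refine ⟨K * q, fun a => ?_⟩
  set x : ℝ := Int.fract (lam * a) with hxdef
  have hx0 : 0 ≤ x := Int.fract_nonneg _
  have hx1 : x < 1 := Int.fract_lt_one _
  have hfloor : (⌊lam * (a:ℝ)⌋ : ℝ) + x = lam * a := Int.floor_add_fract _
  rcases lt_or_gt_of_ne hη_ne with hneg | hpos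
  · -- η < 0
    set k' : ℕ := ⌈x / (-η)⌉₊ with hk'def
    have hηpos : 0 < -η := by linarith
    have hk'le : x / (-η) ≤ (k' : ℝ) := Nat.le_ceil _
    have hk'lt : (k' : ℝ) < x / (-η) + 1 :=
      Nat.ceil_lt_add_one (div_nonneg hx0 hηpos.le)
    have hk'K : k' ≤ K := by
      apply Nat.ceil_le_ceil
      rw [abs_of_neg hneg]
      gcongr <;> linarith
    refine ⟨a + k' * q, Nat.le_add_right _ _, by
      have : k' * q ≤ K * q := Nat.mul_le_mul_right q hk'K
      omega, ⟨⌊lam * (a:ℝ)⌋ + k' * j, ?_⟩⟩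
    have hcalc : lam * ((a + k' * q : ℕ):ℝ) - ((⌊lam * (a:ℝ)⌋ + k' * j : ℤ):ℝ) = x + k' * η := by
      push_cast [hqR]
      linear_combination -hfloor + (k':ℝ) * hηdef
    rw [hcalc]
    have h1 : x + k' * η ≤ 0 := by
      have h : x ≤ (k':ℝ) * (-η) := (div_le_iff₀ hηpos).mp hk'le
      linarith
    have h2 : η < x + k' * η := by
      have h : ((k':ℝ) - 1) * (-η) < x := (lt_div_iff₀ hηpos).mp (by linarith)
      nlinarith
    rw [abs_of_nonpos h1]
    rw [abs_of_neg hneg] at hηδ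
    linarith
  · -- η > 0
    set k' : ℕ := ⌈(1 - x) / η⌉₊ with hk'def
    have hk'le : (1 - x) / η ≤ (k' : ℝ) := Nat.le_ceil _
    have hk'lt : (k' : ℝ) < (1 - x) / η + 1 :=
      Nat.ceil_lt_add_one (div_nonneg (by linarith) hpos.le)
    have hk'K : k' ≤ K := by
      apply Nat.ceil_le_ceil
      rw [abs_of_pos hpos]
      gcongr <;> linarith
    refine ⟨a + k' * q, Nat.le_add_right _ _, by
      have : k' * q ≤ K * q := Nat.mul_le_mul_right q hk'K
      omega, ⟨⌊lam * (a:ℝ)⌋ + k' * j + 1, ?_⟩⟩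
    have hcalc : lam * ((a + k' * q : ℕ):ℝ) - ((⌊lam * (a:ℝ)⌋ + k' * j + 1 : ℤ):ℝ)
        = x + k' * η - 1 := by
      push_cast [hqR]
      linear_combination -hfloor + (k':ℝ) * hηdef
    rw [hcalc]
    have h1 : 0 ≤ x + k' * η - 1 := by
      have h : 1 - x ≤ (k':ℝ) * η := (div_le_iff₀ hpos).mp hk'le
      linarith
    have h2 : x + k' * η - 1 < η := by
      have h : ((k':ℝ) - 1) * η < 1 - x := (lt_div_iff₀ hpos).mp (by linarith)
      nlinarith
    rw [abs_of_nonneg h1]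
    rw [abs_of_pos hpos] at hηδ
    linarith

set_option maxHeartbeats 1000000 in
/-- Theorem (ii) of Theorem 1.5: the common return-time set can be empty. -/
theorem stmt_3 (lam ξ : ℝ) (hlam : Irrational lam) (hξ : ∀ n : ℤ, (n : ℝ) ≠ ξ)
    (L : ℕ) (hL : (1 : ℝ) + |lam| < (L : ℝ) * distNearestInt ξ) :
    ∃ E : Set ℕ, PosDensity E ∧
      retSetFloor (fun t => t ^ ((3 : ℝ) / 2)) E ∩
        retSetFloor (fun t => lam * t ^ ((3 : ℝ) / 2) + (L : ℝ) * (t + ξ)) E = ∅ := by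
  classical
  set θ : ℝ := ξ - (round ξ : ℤ) with hθdef
  have hLdist : distNearestInt ξ = |θ| := rfl
  rw [hLdist] at hL
  have hθhalf : |θ| ≤ 1/2 := by rw [hθdef]; exact abs_sub_round ξ
  have hθne : θ ≠ 0 := by
    intro h
    exact hξ (round ξ) (by simp only [hθdef] at h; linarith)
  have hθpos : 0 < |θ| := abs_pos.2 hθne
  have hlampos : 0 ≤ |lam| := abs_nonneg _
  have hLR : (0:ℝ) < L := by nlinarith
  have hLnat : 0 < L := by exact_mod_cast hLR
  set δ : ℝ := ((L:ℝ) * |θ| - 1 - |lam|) / (4 * L) with hδdef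
  have hδpos : 0 < δ := by
    apply div_pos (by linarith) (by linarith)
  obtain ⟨W, hW⟩ := exists_window lam hlam hδpos
  set G : ℕ := W + 1 with hGdef
  have hwin : ∀ jj : ℕ, ∃ m : ℕ, jj * G ≤ m ∧ m < (jj+1) * G ∧ ∃ c : ℤ, |lam * m - c| < δ := by
    intro jj
    obtain ⟨m, h1, h2, hc⟩ := hW (jj * G)
    exact ⟨m, h1, by
      have : (jj+1)*G = jj*G + W + 1 := by ring
      omega, hc⟩
  choose f hf1 hf2 hf3 using hwin
  choose c hc using hf3
  have hGpos : 0 < G := Nat.succ_pos _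
  set E : Set ℕ := {m : ℕ | ∃ jj : ℕ, m = L * f jj} with hEdef
  refine ⟨E, ?_, ?_⟩
  · -- positive density
    set S : ℕ := L * G with hSdef
    have hSpos : 0 < S := Nat.mul_pos hLnat hGpos
    have hSR : (0:ℝ) < S := by exact_mod_cast hSpos
    have hmono : StrictMono fun jj => L * f jj := by
      have hfm : StrictMono f := strictMono_nat_of_lt_succ fun jj => by
        have h1 := hf2 jj
        have h2 := hf1 (jj+1)
        omega
      intro a b hab
      exact (Nat.mul_lt_mul_left hLnat).mpr (hfm hab)
    have hupper : ∀ N : ℕ, countIn E N ≤ N / S + 1 := by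
      intro N
      have hsub : ((Finset.Icc 1 N).filter (fun m => m ∈ E)) ⊆
          (Finset.Icc 0 (N / S)).image (fun jj => L * f jj) := by
        intro m hm
        simp only [Finset.mem_filter, Finset.mem_Icc, hEdef, Set.mem_setOf_eq] at hm
        obtain ⟨⟨hm1, hmN⟩, jj, rfl⟩ := hm
        refine Finset.mem_image.2 ⟨jj, Finset.mem_Icc.2 ⟨Nat.zero_le _, ?_⟩, rfl⟩
        have h1 : jj * S ≤ L * f jj := by
          calc jj * (L * G) = L * (jj * G) := by ring
          _ ≤ L * f jj := Nat.mul_le_mul_left _ (hf1 jj)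
        exact (Nat.le_div_iff_mul_le hSpos).2 (h1.trans hmN)
      calc countIn E N ≤ ((Finset.Icc 0 (N/S)).image (fun jj => L * f jj)).card :=
            Finset.card_le_card hsub
        _ ≤ (Finset.Icc 0 (N/S)).card := Finset.card_image_le
        _ = N/S + 1 := by simp
    have hlower : ∀ N : ℕ, N / S ≤ countIn E N + 1 := by
      intro N
      set D := N / S with hDdef
      rcases Nat.eq_zero_or_pos D with hD | hD
      · omega
      have himg : (Finset.Icc 1 (D - 1)).image (fun jj => L * f jj) ⊆
          (Finset.Icc 1 N).filter (fun m => m ∈ E) := by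
        intro m hm
        obtain ⟨jj, hj, rfl⟩ := Finset.mem_image.1 hm
        rw [Finset.mem_Icc] at hj
        obtain ⟨hj1, hj2⟩ := hj
        refine Finset.mem_filter.2 ⟨Finset.mem_Icc.2 ⟨?_, ?_⟩, ⟨jj, rfl⟩⟩
        · have : 1 * 1 ≤ jj * G := Nat.mul_le_mul hj1 hGpos
          have := hf1 jj
          nlinarith [hLnat]
        · have h1 : L * f jj < L * ((jj+1) * G) := (Nat.mul_lt_mul_left hLnat).mpr (hf2 jj)
          have h2 : (jj + 1) ≤ D := by omega
          have h3 : L * ((jj+1)*G) ≤ D * S := by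
            calc L * ((jj+1)*G) = (jj+1) * S := by rw [hSdef]; ring
            _ ≤ D * S := Nat.mul_le_mul_right S h2
          have h4 : D * S ≤ N := Nat.div_mul_le_self N S
          omega
      have hcard : D - 1 ≤ countIn E N := by
        calc D - 1 = (Finset.Icc 1 (D-1)).card := by simp
        _ = ((Finset.Icc 1 (D-1)).image (fun jj => L * f jj)).card :=
              (Finset.card_image_of_injective _ hmono.injective).symm
        _ ≤ countIn E N := Finset.card_le_card himg
      omega
    refine ⟨(S:ℝ)⁻¹, by positivity, ?_⟩
    have hlim1 : Tendsto (fun N : ℕ => (S:ℝ)⁻¹ - 2/(N:ℝ)) atTop (nhds ((S:ℝ)⁻¹)) := by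
      have := tendsto_const_div_atTop_nhds_zero_nat (2:ℝ)
      have h := (tendsto_const_nhds (x := (S:ℝ)⁻¹) (f := atTop)).sub this
      simpa using h
    have hlim2 : Tendsto (fun N : ℕ => (S:ℝ)⁻¹ + 2/(N:ℝ)) atTop (nhds ((S:ℝ)⁻¹)) := by
      have := tendsto_const_div_atTop_nhds_zero_nat (2:ℝ)
      have h := (tendsto_const_nhds (x := (S:ℝ)⁻¹) (f := atTop)).add this
      simpa using h
    apply tendsto_of_tendsto_of_tendsto_of_le_of_le' hlim1 hlim2
    · filter_upwards [eventually_ge_atTop 1] with N hN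
      have hN0 : (0:ℝ) < N := by exact_mod_cast hN
      have hnd : ((N / S : ℕ) : ℝ) * S ≤ N := by exact_mod_cast Nat.div_mul_le_self N S
      have hmod : (N:ℝ) < (((N / S : ℕ) : ℝ) + 1) * S := by
        have h1 : S * (N / S) + N % S = N := Nat.div_add_mod N S
        have h2 : N % S < S := Nat.mod_lt N hSpos
        have h1' : (S:ℝ) * ((N/S:ℕ):ℝ) + ((N % S:ℕ):ℝ) = N := by exact_mod_cast h1
        have h2' : ((N % S:ℕ):ℝ) < S := by exact_mod_cast h2
        nlinarith
      have hcl : ((N / S : ℕ) : ℝ) ≤ (countIn E N : ℝ) + 1 := by exact_mod_cast hlower N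
      have key : (N:ℝ)/S - 2 ≤ (countIn E N : ℝ) := by
        have h1 : (N:ℝ)/S < ((N / S : ℕ) : ℝ) + 1 := by
          rw [div_lt_iff₀ hSR]; linarith
        linarith
      calc (S:ℝ)⁻¹ - 2/(N:ℝ) = ((N:ℝ)/S - 2)/N := by field_simp
        _ ≤ (countIn E N : ℝ)/N := by gcongr
    · filter_upwards [eventually_ge_atTop 1] with N hN
      have hN0 : (0:ℝ) < N := by exact_mod_cast hN
      have hnd : ((N / S : ℕ) : ℝ) * S ≤ N := by exact_mod_cast Nat.div_mul_le_self N S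
      have hcu : (countIn E N : ℝ) ≤ ((N / S : ℕ) : ℝ) + 1 := by exact_mod_cast hupper N
      have key : (countIn E N : ℝ) ≤ (N:ℝ)/S + 2 := by
        have h1 : ((N / S : ℕ) : ℝ) ≤ (N:ℝ)/S := by
          rw [le_div_iff₀ hSR]; linarith
        linarith
      calc (countIn E N : ℝ)/N ≤ ((N:ℝ)/S + 2)/N := by gcongr
        _ = (S:ℝ)⁻¹ + 2/(N:ℝ) := by field_simp
  · -- disjointness
    rw [Set.eq_empty_iff_forall_notMem]
    rintro n ⟨hn1, hn2⟩
    simp only [retSetFloor, retSet, hEdef, Set.mem_setOf_eq] at hn1 hn2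
    obtain ⟨m1, m1', ⟨j1, rfl⟩, ⟨j1', rfl⟩, heq1⟩ := hn1
    obtain ⟨m2, m2', ⟨j2, rfl⟩, ⟨j2', rfl⟩, heq2⟩ := hn2
    set x : ℝ := (n:ℝ) ^ ((3:ℝ)/2) with hxdef
    -- from the first return set
    have ha : (⌊x⌋ : ℝ) = (L:ℝ) * ((f j1' : ℝ) - (f j1 : ℝ)) := by
      have : (⌊x⌋ : ℤ) = (L:ℤ) * ((f j1' : ℤ) - (f j1 : ℤ)) := by push_cast at heq1 ⊢; linarith
      exact_mod_cast congrArg (Int.cast : ℤ → ℝ) this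
    set M : ℤ := c j1' - c j1 with hMdef
    set r : ℝ := (lam * (f j1') - (c j1' : ℝ)) - (lam * (f j1) - (c j1 : ℝ)) with hrdef
    have hr2 : |r| < 2 * δ := by
      calc |r| ≤ |lam * (f j1') - (c j1' : ℝ)| + |lam * (f j1) - (c j1 : ℝ)| := abs_sub _ _
      _ < 2 * δ := by linarith [hc j1, hc j1']
    have hla : lam * (⌊x⌋ : ℝ) = (L:ℝ) * (M : ℝ) + (L:ℝ) * r := by
      rw [ha, hMdef, hrdef]; push_cast; ring
    set t : ℝ := (L:ℝ) * r + lam * Int.fract x + (L:ℝ) * θ with htdef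
    -- from the second return set: divisibility
    have hdvd : (L:ℤ) ∣ ⌊lam * x + (L:ℝ) * ((n:ℝ) + ξ)⌋ := by
      refine ⟨(f j2' : ℤ) - (f j2 : ℤ), ?_⟩
      push_cast at heq2 ⊢
      linarith
    -- key floor identity
    have hkey : lam * x + (L:ℝ) * ((n:ℝ) + ξ) =
        (((L:ℤ) * (M + n + round ξ) : ℤ) : ℝ) + t := by
      have hfr : (⌊x⌋ : ℝ) + Int.fract x = x := Int.floor_add_fract x
      have hxi : ξ = (round ξ : ℝ) + θ := by rw [hθdef]; push_cast; ring
      push_cast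
      rw [htdef]
      linear_combination (-lam) * hfr + hla + (L:ℝ) * hxi
    have hbfl : ⌊lam * x + (L:ℝ) * ((n:ℝ) + ξ)⌋ = (L:ℤ) * (M + n + round ξ) + ⌊t⌋ := by
      rw [hkey, Int.floor_intCast_add]
    have hdvdt : (L:ℤ) ∣ ⌊t⌋ := by
      have h2 : (L:ℤ) ∣ (L:ℤ) * (M + n + round ξ) + ⌊t⌋ := hbfl ▸ hdvd
      exact (dvd_add_right (Dvd.intro _ rfl)).mp h2
    -- bounds on t
    have hfr0 : 0 ≤ Int.fract x := Int.fract_nonneg x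
    have hfr1 : Int.fract x < 1 := Int.fract_lt_one x
    have habs1 : |t - (L:ℝ) * θ| < ((L:ℝ) * |θ| - 1 + |lam|) / 2 := by
      have h1 : |t - (L:ℝ)*θ| ≤ (L:ℝ) * |r| + |lam| * Int.fract x := by
        have : t - (L:ℝ)*θ = (L:ℝ)*r + lam * Int.fract x := by rw [htdef]; ring
        rw [this]
        calc |(L:ℝ)*r + lam * Int.fract x| ≤ |(L:ℝ)*r| + |lam * Int.fract x| := abs_add_le _ _
          _ = (L:ℝ) * |r| + |lam| * Int.fract x := by
              rw [abs_mul, abs_mul, abs_of_nonneg (le_of_lt hLR), abs_of_nonneg hfr0]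
      have h2 : (L:ℝ) * |r| < (L:ℝ) * (2*δ) := by
        apply mul_lt_mul_of_pos_left hr2 hLR
      have h3 : (L:ℝ) * (2*δ) = ((L:ℝ) * |θ| - 1 - |lam|) / 2 := by
        rw [hδdef]; field_simp; ring
      have h4 : |lam| * Int.fract x ≤ |lam| :=
        mul_le_of_le_one_right (abs_nonneg lam) hfr1.le
      linarith
    have hLθ : |(L:ℝ) * θ| = (L:ℝ) * |θ| := by
      rw [abs_mul, abs_of_nonneg (le_of_lt hLR)]
    have ht_lb : 1 < |t| := by
      have := abs_sub_abs_le_abs_sub ((L:ℝ)*θ) t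
      rw [abs_sub_comm ((L:ℝ)*θ) t, hLθ] at this
      linarith
    have ht_ub : |t| < (L:ℝ) - 1 := by
      have := abs_sub_abs_le_abs_sub t ((L:ℝ)*θ)
      rw [hLθ] at this
      nlinarith [mul_le_mul_of_nonneg_left hθhalf (le_of_lt hLR)]
    -- contradiction
    have hft : ⌊t⌋ ≠ 0 ∧ |⌊t⌋| < (L:ℤ) := by
      rcases lt_abs.mp ht_lb with h | h
      · -- 1 < t
        have hf1' : 1 ≤ ⌊t⌋ := Int.le_floor.2 (by exact_mod_cast h.le)
        have hf2' : (⌊t⌋:ℝ) < (L:ℝ) := (Int.floor_le t).trans_lt (by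
          have := (abs_lt.mp ht_ub).2; linarith)
        have : ⌊t⌋ < (L:ℤ) := by exact_mod_cast hf2'
        constructor
        · omega
        · rw [abs_of_pos (by omega)]; exact this
      · -- t < -1
        have h' : t < -1 := by linarith
        have hf1' : (⌊t⌋:ℝ) < -1 := (Int.floor_le t).trans_lt h'
        have hf1'' : ⌊t⌋ < -1 := by exact_mod_cast hf1'
        have hlow : -(L:ℝ) + 1 - 1 < (⌊t⌋:ℝ) := by
          have := Int.sub_one_lt_floor t
          have := (abs_lt.mp ht_ub).1
          linarith
        have hlow' : -(L:ℤ) < ⌊t⌋ := by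
          have : (-(L:ℝ)) < (⌊t⌋:ℝ) := by linarith
          exact_mod_cast this
        constructor
        · omega
        · rw [abs_of_neg (by omega)]; omega
    exact hft.1 (Int.eq_zero_of_abs_lt_dvd hdvdt hft.2)
end

section
/- Let λ ∈ ℝ be irrational and let L ∈ ℕ, L ≥ 1. Define h₁(t) = t^{3/2}, h₂(t) = λ t^{3/2} + L(t + √2), and h₃(t) = t². Then for a polynomial q with integer coefficients, the following are equivalent: (1) there exist real numbers a, b, c, not all zero, such that a·h₁(t) + b·h₂(t) + c·h₃(t) − q(t) → 0 as t → ∞; (2) q(t) = c·t² for some nonzero integer c. -/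
open Filter

open Polynomial in
/-- The computation of the integer polynomial shadows in Theorem 1.6:
q ∈ 𝒫_ℤ(h₁,h₂,h₃) iff q = c t² with c a nonzero integer. -/
theorem stmt_4 (lam : ℝ) (hlam : Irrational lam) (L : ℕ) (hL : 1 ≤ L)
    (q : Polynomial ℤ) :
    (∃ a b c : ℝ, ¬(a = 0 ∧ b = 0 ∧ c = 0) ∧
      Tendsto (fun t : ℝ =>
        a * t ^ ((3 : ℝ) / 2)
          + b * (lam * t ^ ((3 : ℝ) / 2) + (L : ℝ) * (t + Real.sqrt 2))
          + c * t ^ (2 : ℕ)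
          - Polynomial.aeval t q) atTop (nhds 0))
    ↔ ∃ c : ℤ, c ≠ 0 ∧ q = Polynomial.C c * Polynomial.X ^ 2 := by
  constructor
  · rintro ⟨a, b, c, hne, htend⟩
    set α : ℝ := a + b * lam with hα
    set β : ℝ := b * L with hβ
    set r : Polynomial ℝ := q.map (Int.castRingHom ℝ) with hr
    have hrc : ∀ i, r.coeff i = (q.coeff i : ℝ) := fun i => Polynomial.coeff_map _ i
    set p : Polynomial ℝ := C c * X ^ 4 + C α * X ^ 3 + C β * X ^ 2
        + C (β * Real.sqrt 2) - Polynomial.expand ℝ 2 r with hp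
    -- the evaluation of p tends to 0
    have hsq : Tendsto (fun t : ℝ => t ^ 2) atTop atTop := tendsto_pow_atTop two_ne_zero
    have hcomp := htend.comp hsq
    have hpev : Tendsto (fun t : ℝ => p.eval t) atTop (nhds 0) := by
      refine hcomp.congr' ?_
      filter_upwards [eventually_ge_atTop (0:ℝ)] with t ht
      have h32 : ((t^2:ℝ)) ^ ((3:ℝ)/2) = t ^ 3 := by
        rw [← Real.rpow_natCast t 2, ← Real.rpow_natCast t 3, ← Real.rpow_mul ht]
        norm_num
      have haev : (Polynomial.aeval (t^2) q : ℝ) = r.eval (t^2) := by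
        rw [Polynomial.aeval_def, hr, Polynomial.eval_map, algebraMap_int_eq]
      simp only [Function.comp, hp, Polynomial.eval_sub, Polynomial.eval_add,
        Polynomial.eval_mul, Polynomial.eval_pow, Polynomial.eval_C, Polynomial.eval_X,
        Polynomial.expand_eval, h32, haev, hα, hβ]
      ring
    have hp0 : p = 0 := by
      rw [Polynomial.tendsto_nhds_iff] at hpev
      exact Polynomial.leadingCoeff_eq_zero.mp hpev.1
    have hcoeff : ∀ n, p.coeff n = 0 := fun n => by rw [hp0]; simp
    have hexp : ∀ n, (Polynomial.expand ℝ 2 r).coeff n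
        = if 2 ∣ n then r.coeff (n / 2) else 0 := fun n =>
      Polynomial.coeff_expand (by norm_num) r n
    have h4 : c = (q.coeff 2 : ℝ) := by
      have := hcoeff 4
      simp [hp, hexp, Polynomial.coeff_X_pow, hrc, sub_eq_zero] at this
      exact this
    have h3 : α = 0 := by
      have := hcoeff 3
      simpa [hp, hexp, Polynomial.coeff_X_pow, hrc, sub_eq_zero] using this
    have h2 : β = (q.coeff 1 : ℝ) := by
      have := hcoeff 2
      simp [hp, hexp, Polynomial.coeff_X_pow, hrc, sub_eq_zero] at this
      exact this
    have h0 : β * Real.sqrt 2 = (q.coeff 0 : ℝ) := by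
      have := hcoeff 0
      simp [hp, hexp, Polynomial.coeff_X_pow, hrc, sub_eq_zero] at this
      exact this
    have hhigh : ∀ k, 3 ≤ k → q.coeff k = 0 := by
      intro k hk
      have := hcoeff (2 * k)
      have hne4 : 2 * k ≠ 4 := by omega
      have hne3 : 2 * k ≠ 3 := by omega
      have hne2 : 2 * k ≠ 2 := by omega
      have hne0 : 2 * k ≠ 0 := by omega
      have hdvd : 2 ∣ 2 * k := ⟨k, rfl⟩
      have hdiv : 2 * k / 2 = k := by omega
      simp [hp, hexp, Polynomial.coeff_X_pow, Polynomial.coeff_C, hne4, hne3, hne2,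
        hne0, hdvd, hdiv, hrc] at this
      exact_mod_cast this
    -- show b = 0
    have hb : b = 0 := by
      by_contra hb
      have hβne : β ≠ 0 := by
        have hLne : (L:ℝ) ≠ 0 := by positivity
        exact mul_ne_zero hb hLne
      have hq1 : (q.coeff 1 : ℝ) ≠ 0 := h2 ▸ hβne
      have : Real.sqrt 2 = (q.coeff 0 : ℝ) / (q.coeff 1 : ℝ) := by
        field_simp [← h0, h2]
        rw [← h0, h2]; ring
      exact irrational_sqrt_two ⟨(q.coeff 0 : ℚ) / (q.coeff 1 : ℚ), by
        push_cast; rw [← this]⟩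
    have hβ0 : β = 0 := by rw [hβ, hb, zero_mul]
    have ha : a = 0 := by rw [hα, hb, zero_mul, add_zero] at h3; exact h3
    have hc : c ≠ 0 := fun h => hne ⟨ha, hb, h⟩
    have hq1 : q.coeff 1 = 0 := by
      have := h2; rw [hβ0] at this; exact_mod_cast this.symm
    have hq0 : q.coeff 0 = 0 := by
      have := h0; rw [hβ0, zero_mul] at this; exact_mod_cast this.symm
    refine ⟨q.coeff 2, ?_, ?_⟩
    · intro h; apply hc; rw [h4, h]; simp
    · ext n
      rcases n with _ | _ | _ | n
      · simpa using hq0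
      · simpa using hq1
      · simp [Polynomial.coeff_C_mul, Polynomial.coeff_X_pow]
      · have h := hhigh (n + 3) (by omega)
        rw [Polynomial.coeff_C_mul, Polynomial.coeff_X_pow, h, if_neg (by omega), mul_zero]
  · rintro ⟨c, hc, rfl⟩
    refine ⟨0, 0, (c : ℝ), ?_, ?_⟩
    · rintro ⟨-, -, h⟩
      exact hc (by exact_mod_cast h)
    · have : (fun t : ℝ =>
        0 * t ^ ((3 : ℝ) / 2)
          + 0 * (lam * t ^ ((3 : ℝ) / 2) + (L : ℝ) * (t + Real.sqrt 2))
          + (c:ℝ) * t ^ (2 : ℕ)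
          - Polynomial.aeval t (Polynomial.C c * Polynomial.X ^ 2)) = fun _ => 0 := by
        funext t; simp
      rw [this]
      exact tendsto_const_nhds
end

section
/- Let P be a nonconstant real polynomial of degree d with leading coefficient a_d, and let γ ∈ ℝ be such that γ·a_d is irrational. If 0 < η < 2^{−(d+1)}, then the set {n ∈ ℕ : ‖γ·P(n)‖ < η} is not thick. -/
open Filter

section Aux

open Polynomial

lemma dni_nonneg (x : ℝ) : 0 ≤ distNearestInt x := abs_nonneg _

lemma dni_le (x : ℝ) (z : ℤ) : distNearestInt x ≤ |x - z| := round_le x z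

lemma dni_zero : distNearestInt 0 = 0 := by simp [distNearestInt]

lemma dni_add (x y : ℝ) : distNearestInt (x + y) ≤ distNearestInt x + distNearestInt y := by
  calc distNearestInt (x + y) ≤ |x + y - ((round x + round y : ℤ) : ℝ)| := dni_le _ _
    _ = |(x - round x) + (y - round y)| := by push_cast; ring_nf
    _ ≤ _ := abs_add_le _ _

lemma dni_neg (x : ℝ) : distNearestInt (-x) = distNearestInt x := by
  have h : ∀ y : ℝ, distNearestInt (-y) ≤ distNearestInt y := by
    intro y
    have e : (-y) - ((-(round y) : ℤ) : ℝ) = round y - y := by push_cast; ring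
    calc distNearestInt (-y) ≤ |(-y) - ((-(round y) : ℤ) : ℝ)| := dni_le _ _
      _ = |y - round y| := by rw [e, abs_sub_comm]
      _ = distNearestInt y := rfl
  exact le_antisymm (h x) (by simpa using h (-x))

lemma dni_sub (x y : ℝ) : distNearestInt (x - y) ≤ distNearestInt x + distNearestInt y := by
  rw [sub_eq_add_neg]
  simpa [dni_neg] using dni_add x (-y)

lemma dni_int (z : ℤ) : distNearestInt (z : ℝ) = 0 := by
  simp [distNearestInt]

lemma dni_add_int (x : ℝ) (z : ℤ) : distNearestInt (x + z) = distNearestInt x := by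
  apply le_antisymm
  · have := dni_add x (z : ℝ)
    simpa [dni_int] using this
  · calc distNearestInt x
        = distNearestInt ((x + z) + ((-z : ℤ) : ℝ)) := congrArg _ (by push_cast; ring)
      _ ≤ distNearestInt (x + z) + distNearestInt ((-z : ℤ) : ℝ) := dni_add _ _
      _ = distNearestInt (x + z) := by rw [dni_int]; ring

lemma dni_nsmul (n : ℕ) (x : ℝ) : distNearestInt ((n : ℝ) * x) ≤ n * distNearestInt x := by
  induction n with
  | zero => simp [dni_zero]
  | succ n ih =>
    have e : ((n + 1 : ℕ) : ℝ) * x = (n : ℝ) * x + x := by push_cast; ring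
    rw [e]
    calc distNearestInt ((n : ℝ) * x + x)
        ≤ distNearestInt ((n : ℝ) * x) + distNearestInt x := dni_add _ _
      _ ≤ n * distNearestInt x + distNearestInt x := by linarith
      _ = ((n + 1 : ℕ) : ℝ) * distNearestInt x := by push_cast; ring

lemma dni_zmul (z : ℤ) (x : ℝ) :
    distNearestInt ((z : ℝ) * x) ≤ (z.natAbs : ℝ) * distNearestInt x := by
  have key := dni_nsmul z.natAbs x
  have habs : ((z.natAbs : ℕ) : ℝ) = |(z : ℝ)| := by
    rw [Nat.cast_natAbs, Int.cast_abs]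
  rcases abs_choice ((z : ℝ)) with h | h
  · have e : ((z.natAbs : ℕ) : ℝ) * x = (z : ℝ) * x := by rw [habs, h]
    rwa [e] at key
  · have e : ((z.natAbs : ℕ) : ℝ) * x = -((z : ℝ) * x) := by rw [habs, h]; ring
    rw [e, dni_neg] at key
    exact key

lemma dni_sum {ι : Type*} (s : Finset ι) (f : ι → ℝ) :
    distNearestInt (∑ i ∈ s, f i) ≤ ∑ i ∈ s, distNearestInt (f i) := by
  classical
  induction s using Finset.cons_induction with
  | empty => simp [dni_zero]
  | cons a s ha ih =>
    rw [Finset.sum_cons, Finset.sum_cons]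
    exact (dni_add _ _).trans (by linarith)

lemma dni_half : distNearestInt (1 / 2 : ℝ) = 1 / 2 := by
  have h : round (1 / 2 : ℝ) = 1 := by
    rw [round_eq]; norm_num
  rw [distNearestInt, h]
  norm_num

lemma diff_poly (n : ℕ) (Q : ℝ[X]) (hQ : Q.natDegree = n + 1) :
    (Q.comp (X + C 1) - Q).natDegree = n ∧
    (Q.comp (X + C 1) - Q).leadingCoeff = ((n : ℝ) + 1) * Q.leadingCoeff := by
  set R := Q.comp (X + C 1) - Q with hR
  have hcomp : Q.comp (X + C 1) = Polynomial.taylor 1 Q := (taylor_apply 1 Q).symm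
  have hXC : (X + C (1 : ℝ)).natDegree = 1 := by simpa using natDegree_X_add_C (1 : ℝ)
  have hdegcomp : (Q.comp (X + C 1)).natDegree = n + 1 := by
    rw [natDegree_comp, hXC, mul_one, hQ]
  have hc1 : R.coeff (n + 1) = 0 := by
    have h1 : (Q.comp (X + C 1)).coeff (n + 1) = (Polynomial.hasseDeriv (n + 1) Q).eval 1 := by
      rw [hcomp, Polynomial.taylor_coeff]
    have hle : (Polynomial.hasseDeriv (n + 1) Q).natDegree ≤ 0 := by
      have := Polynomial.natDegree_hasseDeriv_le Q (n + 1)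
      omega
    have h2 : Polynomial.hasseDeriv (n + 1) Q = C (Q.coeff (n + 1)) := by
      rw [Polynomial.eq_C_of_natDegree_le_zero hle]
      congr 1
      rw [Polynomial.hasseDeriv_coeff]
      simp
    rw [hR, coeff_sub, h1, h2]
    simp
  have hc2 : R.coeff n = ((n : ℝ) + 1) * Q.leadingCoeff := by
    have h1 : (Q.comp (X + C 1)).coeff n = (Polynomial.hasseDeriv n Q).eval 1 := by
      rw [hcomp, Polynomial.taylor_coeff]
    have hle : (Polynomial.hasseDeriv n Q).natDegree ≤ 1 := by
      have := Polynomial.natDegree_hasseDeriv_le Q n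
      omega
    have h2 := Polynomial.eq_X_add_C_of_natDegree_le_one hle
    have e1 : (Polynomial.hasseDeriv n Q).coeff 1 = ((n : ℝ) + 1) * Q.coeff (n + 1) := by
      rw [Polynomial.hasseDeriv_coeff]
      rw [Nat.add_comm 1 n, Nat.choose_succ_self_right]
      push_cast; ring
    have e0 : (Polynomial.hasseDeriv n Q).coeff 0 = Q.coeff n := by
      rw [Polynomial.hasseDeriv_coeff]
      simp
    rw [hR, coeff_sub, h1]
    conv_lhs => rw [h2]
    rw [eval_add, eval_mul, eval_C, eval_X, eval_C, e1, e0]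
    rw [Polynomial.leadingCoeff, hQ]
    ring
  have hQ0 : Q.leadingCoeff ≠ 0 := by
    intro h
    rw [leadingCoeff_eq_zero] at h
    rw [h] at hQ
    simp at hQ
  have hcne : R.coeff n ≠ 0 := by
    rw [hc2]
    exact mul_ne_zero (by positivity) hQ0
  have hRle : R.natDegree ≤ n + 1 := by
    refine le_trans (natDegree_sub_le _ _) ?_
    rw [hdegcomp, hQ]
    simp
  have hRle' : R.natDegree ≤ n := by
    refine Polynomial.natDegree_le_iff_coeff_eq_zero.mpr ?_
    intro N hN
    rcases eq_or_lt_of_le (Nat.succ_le_of_lt hN) with h | h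
    · rw [← h]; exact hc1
    · exact Polynomial.coeff_eq_zero_of_natDegree_lt (lt_of_le_of_lt hRle h)
  have hRdeg : R.natDegree = n := le_antisymm hRle' (le_natDegree_of_ne_zero hcne)
  refine ⟨hRdeg, ?_⟩
  rw [Polynomial.leadingCoeff, hRdeg, hc2]

lemma iter_diff (m : ℕ) : ∀ Q : ℝ[X], Q.natDegree = m + 1 →
    ∃ c : ℝ, ∀ x : ℝ, (fwdDiff (1 : ℝ))^[m] (fun y => Q.eval y) x
      = (((m + 1).factorial : ℝ) * Q.leadingCoeff) * x + c := by
  induction m with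
  | zero =>
    intro Q hQ
    refine ⟨Q.coeff 0, fun x => ?_⟩
    simp only [Function.iterate_zero, id_eq]
    conv_lhs => rw [Polynomial.eq_X_add_C_of_natDegree_le_one (le_of_eq hQ)]
    rw [eval_add, eval_mul, eval_C, eval_X, eval_C, Polynomial.leadingCoeff, hQ]
    simp [Nat.factorial]
  | succ m ih =>
    intro Q hQ
    obtain ⟨hdeg, hlead⟩ := diff_poly (m + 1) Q hQ
    obtain ⟨c, hc⟩ := ih _ hdeg
    refine ⟨c, fun x => ?_⟩
    have hstep : fwdDiff (1 : ℝ) (fun y => Q.eval y)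
        = fun y => (Q.comp (X + C 1) - Q).eval y := by
      funext y
      simp [fwdDiff, eval_comp]
    rw [Function.iterate_succ_apply, hstep, hc x, hlead]
    simp only [Nat.factorial_succ]
    push_cast
    ring

end Aux

/-- Lemma 2.1: if γ·(leading coefficient of P) is irrational and
0 < η < 2^{-(d+1)}, then {n : ‖γ P(n)‖ < η} is not thick. -/
theorem stmt_6 (P : Polynomial ℝ) (hP : 0 < P.natDegree) (γ η : ℝ)
    (hγ : Irrational (γ * P.leadingCoeff))
    (hη0 : 0 < η) (hη : η < (2 : ℝ) ^ (-((P.natDegree : ℤ) + 1))) :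
    ¬ Thick {n : ℕ | distNearestInt (γ * P.eval (n : ℝ)) < η} := by
  intro hT
  classical
  set d := P.natDegree with hd
  have hγ0 : γ ≠ 0 := by
    rintro rfl
    exact hγ ⟨0, by simp⟩
  set Q : Polynomial ℝ := Polynomial.C γ * P with hQdef
  have hQd : Q.natDegree = d := Polynomial.natDegree_C_mul hγ0
  have hQl : Q.leadingCoeff = γ * P.leadingCoeff := by
    rw [hQdef, Polynomial.leadingCoeff_mul, Polynomial.leadingCoeff_C]
  obtain ⟨e, he⟩ : ∃ e, d = e + 1 := ⟨d - 1, by omega⟩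
  obtain ⟨c, hc⟩ := iter_diff e Q (by rw [hQd, he])
  set θ : ℝ := ((e + 1).factorial : ℝ) * Q.leadingCoeff with hθdef
  have hθirr : Irrational θ := by
    rw [hθdef, hQl]
    exact hγ.natCast_mul (Nat.factorial_ne_zero _)
  set ε : ℝ := 2 ^ d * η with hεdef
  have hε2 : ε < 1 / 2 := by
    have h1 : (2 : ℝ) ^ (-((d : ℤ) + 1)) = ((2 : ℝ) ^ (d + 1))⁻¹ := by
      rw [← zpow_natCast (2 : ℝ) (d + 1), ← zpow_neg]
      push_cast
      ring_nf
    have h2 : (0 : ℝ) < 2 ^ d := by positivity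
    have := mul_lt_mul_of_pos_left (hη.trans_eq h1) h2
    calc ε < 2 ^ d * ((2 : ℝ) ^ (d + 1))⁻¹ := this
      _ = 1 / 2 := by
        rw [pow_succ]
        field_simp
  have hε0 : 0 < ε := by positivity
  -- main claim
  have claim : ∀ k : ℕ, distNearestInt (θ * k) < ε := by
    intro k
    obtain ⟨N, hN⟩ := hT (e + k)
    have hbound : ∀ M : ℕ, (∀ j : ℕ, j ≤ e →
        distNearestInt (Q.eval ((M + j : ℕ) : ℝ)) < η) →
        distNearestInt (θ * M + c) < 2 ^ e * η := by
      intro M hM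
      have h1 : (fwdDiff (1 : ℝ))^[e] (fun y => Q.eval y) (M : ℝ) = θ * M + c := by
        rw [hc]
      rw [← h1, fwdDiff_iter_eq_sum_shift]
      have hterm : ∀ j ∈ Finset.range (e + 1),
          distNearestInt ((((-1 : ℤ) ^ (e - j) * (e.choose j) : ℤ)) •
            ((fun y => Q.eval y) ((M : ℝ) + j • (1 : ℝ))))
          ≤ (e.choose j : ℝ) * distNearestInt (Q.eval ((M + j : ℕ) : ℝ)) := by
        intro j hj
        have harg : (M : ℝ) + j • (1 : ℝ) = ((M + j : ℕ) : ℝ) := by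
          push_cast
          simp
        simp only [harg]
        have := dni_zmul ((-1 : ℤ) ^ (e - j) * (e.choose j)) (Q.eval ((M + j : ℕ) : ℝ))
        rw [zsmul_eq_mul]
        refine this.trans_eq ?_
        congr 1
        simp [Int.natAbs_mul, Int.natAbs_pow]
      calc distNearestInt (∑ j ∈ Finset.range (e + 1),
            (((-1 : ℤ) ^ (e - j) * (e.choose j) : ℤ)) •
              ((fun y => Q.eval y) ((M : ℝ) + j • (1 : ℝ))))
          ≤ ∑ j ∈ Finset.range (e + 1),
            distNearestInt ((((-1 : ℤ) ^ (e - j) * (e.choose j) : ℤ)) •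
              ((fun y => Q.eval y) ((M : ℝ) + j • (1 : ℝ)))) := dni_sum _ _
        _ ≤ ∑ j ∈ Finset.range (e + 1),
            (e.choose j : ℝ) * distNearestInt (Q.eval ((M + j : ℕ) : ℝ)) :=
            Finset.sum_le_sum hterm
        _ < ∑ j ∈ Finset.range (e + 1), (e.choose j : ℝ) * η := by
            refine Finset.sum_lt_sum_of_nonempty ⟨0, by simp⟩ ?_
            intro j hj
            have hj' : j ≤ e := by
              simpa [Nat.lt_succ_iff] using Finset.mem_range.mp hj
            have hch : (0 : ℝ) < (e.choose j : ℝ) := by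
              exact_mod_cast Nat.choose_pos hj'
            exact mul_lt_mul_of_pos_left (hM j hj') hch
        _ = 2 ^ e * η := by
            rw [← Finset.sum_mul]
            congr 1
            exact_mod_cast Nat.sum_range_choose e
    have hQP : ∀ n : ℕ, Q.eval ((n : ℕ) : ℝ) = γ * P.eval ((n : ℕ) : ℝ) := by
      intro n
      rw [hQdef]
      simp
    have hA : distNearestInt (θ * N + c) < 2 ^ e * η := by
      refine hbound N fun j hj => ?_
      rw [hQP]
      exact hN j (by omega)
    have hB : distNearestInt (θ * ((N : ℝ) + k) + c) < 2 ^ e * η := by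
      have := hbound (N + k) fun j hj => by
        rw [hQP]
        have e2 : N + k + j = N + (k + j) := by omega
        rw [e2]
        exact hN (k + j) (by omega)
      have e3 : ((N + k : ℕ) : ℝ) = (N : ℝ) + k := by push_cast; ring
      rwa [e3] at this
    have e4 : θ * k = (θ * ((N : ℝ) + k) + c) - (θ * N + c) := by ring
    calc distNearestInt (θ * k)
        ≤ distNearestInt (θ * ((N : ℝ) + k) + c) + distNearestInt (θ * N + c) := by
          rw [e4]; exact dni_sub _ _
      _ < 2 ^ e * η + 2 ^ e * η := by linarith
      _ = ε := by
          rw [hεdef, he, pow_succ]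
          ring
  -- density of the subgroup generated by θ and 1
  set S' : AddSubgroup ℝ := AddSubgroup.closure ({θ, 1} : Set ℝ) with hS'
  have hdense : Dense (S' : Set ℝ) := by
    rcases AddSubgroup.dense_or_cyclic S' with h | ⟨b, hb⟩
    · exact h
    · exfalso
      have hθS : θ ∈ S' := AddSubgroup.subset_closure (by simp)
      have h1S : (1 : ℝ) ∈ S' := AddSubgroup.subset_closure (by simp)
      rw [hb, AddSubgroup.mem_closure_singleton] at hθS h1S
      obtain ⟨n, hn⟩ := hθS
      obtain ⟨m, hm⟩ := h1S
      rw [zsmul_eq_mul] at hn hm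
      have hm0 : (m : ℝ) ≠ 0 := by
        intro h
        rw [h, zero_mul] at hm
        exact one_ne_zero hm.symm
      apply hθirr
      refine ⟨(n : ℚ) / (m : ℚ), ?_⟩
      have hb' : b = 1 / (m : ℝ) := by
        field_simp
        linarith [hm]
      push_cast
      rw [← hn, hb']
      ring
  have h12 : (0 : ℝ) < 1 / 2 - ε := by linarith
  obtain ⟨s, hsS, hs⟩ := hdense.exists_dist_lt (1 / 2 : ℝ) h12
  obtain ⟨z, w, hzw⟩ := AddSubgroup.mem_closure_pair.mp hsS
  rw [zsmul_eq_mul, zsmul_eq_mul, mul_one] at hzw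
  have hds : distNearestInt s = distNearestInt ((z : ℝ) * θ) := by
    rw [← hzw, dni_add_int]
  have hdist : |1 / 2 - s| < 1 / 2 - ε := by
    rw [Real.dist_eq] at hs
    exact hs
  have hsge : ε < distNearestInt s := by
    have h1 : (1 : ℝ) / 2 = distNearestInt (1 / 2 : ℝ) := dni_half.symm
    have h2 : distNearestInt (1 / 2 : ℝ)
        ≤ distNearestInt s + distNearestInt (1 / 2 - s) := by
      have e5 : (1 / 2 : ℝ) = s + (1 / 2 - s) := by ring
      calc distNearestInt (1 / 2 : ℝ) = distNearestInt (s + (1 / 2 - s)) := by rw [← e5]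
        _ ≤ _ := dni_add _ _
    have h3 : distNearestInt (1 / 2 - s) ≤ |1 / 2 - s| := by
      simpa using dni_le (1 / 2 - s) 0
    linarith
  have hlt := claim z.natAbs
  have heq : distNearestInt ((z : ℝ) * θ) = distNearestInt (θ * (z.natAbs : ℕ)) := by
    have habs : ((z.natAbs : ℕ) : ℝ) = |(z : ℝ)| := by
      rw [Nat.cast_natAbs, Int.cast_abs]
    rcases abs_choice ((z : ℝ)) with h | h
    · rw [mul_comm θ, habs, h]
    · rw [mul_comm θ, habs, h, neg_mul, dni_neg]
  rw [hds, heq] at hsge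
  linarith
end

section
/- Let c₁,…,c_m ∈ ℝ and ε > 0. Then there exist arbitrarily large N ∈ ℕ such that for every 1 ≤ j ≤ m, both ‖c_j · N^{3/2}‖ < ε and ‖(3/2) · c_j · N^{1/2}‖ < ε. -/
open Filter

/-- `distNearestInt x` is at most the distance from `x` to any integer. -/
lemma distNearestInt_le (x : ℝ) (M : ℤ) : distNearestInt x ≤ |x - (M : ℝ)| := by
  unfold distNearestInt
  rcases eq_or_ne (round x) M with h | h
  · rw [h]
  · have h1 : |x - (round x : ℝ)| ≤ 1 / 2 := abs_sub_round x
    have h3 : (1 : ℤ) ≤ |round x - M| := Int.one_le_abs (sub_ne_zero.mpr h)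
    have h3' : (1 : ℝ) ≤ |((round x : ℤ) : ℝ) - (M : ℝ)| := by
      have : ((1 : ℤ) : ℝ) ≤ ((|round x - M| : ℤ) : ℝ) := Int.cast_le.mpr h3
      push_cast at this
      simpa using this
    have h4 : |((round x : ℤ) : ℝ) - (M : ℝ)| ≤ |((round x : ℤ) : ℝ) - x| + |x - (M : ℝ)| :=
      abs_sub_le _ x _
    have h5 : |((round x : ℤ) : ℝ) - x| = |x - (round x : ℝ)| := abs_sub_comm _ _
    linarith

/-- If two fractional parts fall in the same `δ`-box, they are within `δ`. -/
lemma fract_diff_lt {δ : ℝ} (hδ : 0 < δ) {y z : ℝ}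
    (h : ⌊Int.fract y / δ⌋₊ = ⌊Int.fract z / δ⌋₊) :
    |Int.fract y - Int.fract z| < δ := by
  have l1 := Nat.floor_le (div_nonneg (Int.fract_nonneg y) hδ.le)
  have u1 := Nat.lt_floor_add_one (Int.fract y / δ)
  have l2 := Nat.floor_le (div_nonneg (Int.fract_nonneg z) hδ.le)
  have u2 := Nat.lt_floor_add_one (Int.fract z / δ)
  rw [h] at l1 u1
  set t : ℕ := ⌊Int.fract z / δ⌋₊
  have l1' : (t : ℝ) * δ ≤ Int.fract y := by
    have := (le_div_iff₀ hδ).mp l1; linarith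
  have u1' : Int.fract y < ((t : ℝ) + 1) * δ := by
    have := (div_lt_iff₀ hδ).mp u1; linarith
  have l2' : (t : ℝ) * δ ≤ Int.fract z := by
    have := (le_div_iff₀ hδ).mp l2; linarith
  have u2' : Int.fract z < ((t : ℝ) + 1) * δ := by
    have := (div_lt_iff₀ hδ).mp u2; linarith
  rw [abs_sub_lt_iff]
  constructor <;> linarith

/-- Cubic finite-difference estimate: if the fractional parts of
`γ u(s)³/6` along a 4-term progression are within `δ` of each other, then
`γ n³` is within `7δ` of an integer. -/
lemma cubic_bound {δ : ℝ} (hδ : 0 < δ) (γ nr : ℝ) (u : ℕ → ℝ)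
    (hu : ∀ s : ℕ, u s = u 0 + s * nr)
    (h1 : |Int.fract (γ * u 1 ^ 3 / 6) - Int.fract (γ * u 0 ^ 3 / 6)| < δ)
    (h2 : |Int.fract (γ * u 2 ^ 3 / 6) - Int.fract (γ * u 0 ^ 3 / 6)| < δ)
    (h3 : |Int.fract (γ * u 3 ^ 3 / 6) - Int.fract (γ * u 0 ^ 3 / 6)| < δ) :
    distNearestInt (γ * nr ^ 3) < 7 * δ := by
  have e0 := Int.floor_add_fract (γ * u 0 ^ 3 / 6)
  have e1 := Int.floor_add_fract (γ * u 1 ^ 3 / 6)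
  have e2 := Int.floor_add_fract (γ * u 2 ^ 3 / 6)
  have e3 := Int.floor_add_fract (γ * u 3 ^ 3 / 6)
  have hid : γ * nr ^ 3 =
      γ * u 3 ^ 3 / 6 - 3 * (γ * u 2 ^ 3 / 6) + 3 * (γ * u 1 ^ 3 / 6) - γ * u 0 ^ 3 / 6 := by
    rw [hu 3, hu 2, hu 1]; push_cast; ring
  set M : ℤ := ⌊γ * u 3 ^ 3 / 6⌋ - 3 * ⌊γ * u 2 ^ 3 / 6⌋ + 3 * ⌊γ * u 1 ^ 3 / 6⌋
      - ⌊γ * u 0 ^ 3 / 6⌋ with hM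
  have key : γ * nr ^ 3 - (M : ℝ) =
      (Int.fract (γ * u 3 ^ 3 / 6) - Int.fract (γ * u 0 ^ 3 / 6))
      - 3 * (Int.fract (γ * u 2 ^ 3 / 6) - Int.fract (γ * u 0 ^ 3 / 6))
      + 3 * (Int.fract (γ * u 1 ^ 3 / 6) - Int.fract (γ * u 0 ^ 3 / 6)) := by
    rw [hM]; push_cast; linarith
  have hle := distNearestInt_le (γ * nr ^ 3) M
  obtain ⟨a1, b1⟩ := abs_lt.mp h1
  obtain ⟨a2, b2⟩ := abs_lt.mp h2
  obtain ⟨a3, b3⟩ := abs_lt.mp h3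
  calc distNearestInt (γ * nr ^ 3) ≤ |γ * nr ^ 3 - (M : ℝ)| := hle
    _ < 7 * δ := by
        rw [key, abs_lt]
        constructor <;> linarith

/-- Linear estimate: if the fractional parts of `β u(s)` at two consecutive
points are within `δ`, then `β n` is within `δ` of an integer. -/
lemma linear_bound {δ : ℝ} (hδ : 0 < δ) (β nr : ℝ) (u : ℕ → ℝ)
    (hu : ∀ s : ℕ, u s = u 0 + s * nr)
    (h1 : |Int.fract (β * u 1) - Int.fract (β * u 0)| < δ) :
    distNearestInt (β * nr) < δ := by
  have e0 := Int.floor_add_fract (β * u 0)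
  have e1 := Int.floor_add_fract (β * u 1)
  have key : β * nr - ((⌊β * u 1⌋ - ⌊β * u 0⌋ : ℤ) : ℝ)
      = Int.fract (β * u 1) - Int.fract (β * u 0) := by
    have hid : β * nr = β * u 1 - β * u 0 := by rw [hu 1]; push_cast; ring
    push_cast
    linarith
  have hle := distNearestInt_le (β * nr) (⌊β * u 1⌋ - ⌊β * u 0⌋)
  rw [key] at hle
  exact lt_of_le_of_lt hle h1

/-- There exist arbitrarily large N making both ‖c_j N^{3/2}‖ and
‖(3/2) c_j N^{1/2}‖ small simultaneously for all j. -/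
theorem stmt_12 (m : ℕ) (c : Fin m → ℝ) (ε : ℝ) (hε : 0 < ε) :
    ∀ N₀ : ℕ, ∃ N : ℕ, N₀ ≤ N ∧ ∀ j : Fin m,
      distNearestInt (c j * (N : ℝ) ^ ((3 : ℝ) / 2)) < ε ∧
      distNearestInt ((3 / 2) * c j * (N : ℝ) ^ ((1 : ℝ) / 2)) < ε := by
  intro N₀
  set δ : ℝ := ε / 8 with hδdef
  have hδ : 0 < δ := by rw [hδdef]; positivity
  set K : ℕ := ⌈1 / δ⌉₊ + 1 with hK
  have hq : ∀ y : ℝ, ⌊Int.fract y / δ⌋₊ < K := by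
    intro y
    have h1 : Int.fract y / δ ≤ 1 / δ := by
      gcongr
      exact (Int.fract_lt_one y).le
    calc ⌊Int.fract y / δ⌋₊ ≤ ⌊1 / δ⌋₊ := Nat.floor_mono h1
      _ ≤ ⌈1 / δ⌉₊ := Nat.floor_le_ceil _
      _ < K := by omega
  set N₁ : ℕ := max N₀ 1 with hN₁
  obtain ⟨a, ha, b, col, hcol⟩ :=
    Combinatorics.exists_mono_homothetic_copy ({0, 1, 2, 3} : Finset ℕ)
      (fun t (j : Fin m) =>
        ((⟨⌊Int.fract (c j * ((N₁ * t : ℕ) : ℝ) ^ 3 / 6) / δ⌋₊, hq _⟩,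
          ⟨⌊Int.fract ((3 / 2) * c j * ((N₁ * t : ℕ) : ℝ)) / δ⌋₊, hq _⟩) : Fin K × Fin K))
  simp only [smul_eq_mul] at hcol
  set n : ℕ := N₁ * a with hn
  have hn1 : 1 ≤ n := by
    have : 1 ≤ N₁ := le_max_right _ _
    calc 1 ≤ N₁ * 1 := by omega
      _ ≤ N₁ * a := Nat.mul_le_mul_left _ ha
  refine ⟨n ^ 2, ?_, ?_⟩
  · have h0 : N₀ ≤ N₁ := le_max_left _ _
    have h1 : N₁ ≤ n := by
      calc N₁ = N₁ * 1 := by omega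
        _ ≤ N₁ * a := Nat.mul_le_mul_left _ ha
    have h2 : n ≤ n ^ 2 := by nlinarith
    omega
  intro j
  have hcast : ((n ^ 2 : ℕ) : ℝ) = ((n : ℝ)) ^ 2 := by push_cast; ring
  have h32 : ((n ^ 2 : ℕ) : ℝ) ^ ((3 : ℝ) / 2) = (n : ℝ) ^ 3 := by
    rw [hcast, ← Real.rpow_natCast (n : ℝ) 2, ← Real.rpow_mul (Nat.cast_nonneg n),
      ← Real.rpow_natCast (n : ℝ) 3]
    norm_num
  have h12 : ((n ^ 2 : ℕ) : ℝ) ^ ((1 : ℝ) / 2) = (n : ℝ) := by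
    rw [hcast, ← Real.rpow_natCast (n : ℝ) 2, ← Real.rpow_mul (Nat.cast_nonneg n)]
    norm_num
  rw [h32, h12]
  -- the progression of sample points
  have hu : ∀ s : ℕ, ((N₁ * (a * s + b) : ℕ) : ℝ)
      = ((N₁ * (a * 0 + b) : ℕ) : ℝ) + (s : ℝ) * ((n : ℕ) : ℝ) := by
    intro s
    rw [hn]
    push_cast
    ring
  -- extract the color equalities
  have key : ∀ s ∈ ({0, 1, 2, 3} : Finset ℕ),
      (⌊Int.fract (c j * ((N₁ * (a * s + b) : ℕ) : ℝ) ^ 3 / 6) / δ⌋₊ =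
        ⌊Int.fract (c j * ((N₁ * (a * 0 + b) : ℕ) : ℝ) ^ 3 / 6) / δ⌋₊) ∧
      (⌊Int.fract ((3 / 2) * c j * ((N₁ * (a * s + b) : ℕ) : ℝ)) / δ⌋₊ =
        ⌊Int.fract ((3 / 2) * c j * ((N₁ * (a * 0 + b) : ℕ) : ℝ)) / δ⌋₊) := by
    intro s hs
    have h1 := congrFun (hcol s hs) j
    have h0 := congrFun (hcol 0 (by simp)) j
    rw [← h0] at h1
    simp only [Prod.mk.injEq, Fin.mk.injEq] at h1
    exact h1
  have k1 := key 1 (by simp)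
  have k2 := key 2 (by simp)
  have k3 := key 3 (by simp)
  constructor
  · have hb := cubic_bound hδ (c j) ((n : ℕ) : ℝ)
      (fun s => ((N₁ * (a * s + b) : ℕ) : ℝ)) hu
      (fract_diff_lt hδ k1.1) (fract_diff_lt hδ k2.1) (fract_diff_lt hδ k3.1)
    rw [hδdef] at hb
    linarith
  · have hb := linear_bound hδ ((3 / 2) * c j) ((n : ℕ) : ℝ)
      (fun s => ((N₁ * (a * s + b) : ℕ) : ℝ)) hu
      (fract_diff_lt hδ k1.2)
    rw [hδdef] at hb
    linarith
end
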